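/- arXiv:2404.16318 — 9 statements merged into one kernel-verified Lean document; each statement's English description precedes it below -/
import Mathlib

section
/- The complement of a proper maximal cohesive set is maximal cohesive: if M ⊂ V is a maximal cohesive set of the influence network G(W) with M ≠ V, then V\M is also a maximal cohesive set. -/
open Finset Filter Topology

/-- `m` is a weighted median of the values `x` with respect to weights `w`. -/
def IsWeightedMedian {n : ℕ} (x w : Fin n → ℝ) (m : ℝ) : Prop :=
  (∃ i, x i = m) ∧
  ∑ i ∈ univ.filter (fun i => x i < m), w i ≤ 1 / 2 ∧
  ∑ i ∈ univ.filter (fun i => m < x i), w i ≤ 1 / 2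

/-- `W` is a row-stochastic matrix. -/
def RowStochastic {n : ℕ} (W : Matrix (Fin n) (Fin n) ℝ) : Prop :=
  (∀ i j, 0 ≤ W i j) ∧ ∀ i, ∑ j, W i j = 1

/-- `M` is a cohesive set of the influence network `G(W)`. -/
def Cohesive {n : ℕ} (W : Matrix (Fin n) (Fin n) ℝ) (M : Finset (Fin n)) : Prop :=
  ∀ i ∈ M, (1 : ℝ) / 2 ≤ ∑ j ∈ M, W i j

/-- `M` is a maximal cohesive set of the influence network `G(W)`. -/
def MaxCohesive {n : ℕ} (W : Matrix (Fin n) (Fin n) ℝ) (M : Finset (Fin n)) : Prop :=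
  Cohesive W M ∧ ∀ i ∉ M, ¬ ((1 : ℝ) / 2 < ∑ j ∈ M, W i j)

/-- `Med` is the weighted-median operator: `Med x i` is the weighted median of `x`
with respect to the `i`-th row of `W` that is closest to `x i`. -/
def IsMedSelection {n : ℕ} (W : Matrix (Fin n) (Fin n) ℝ)
    (Med : (Fin n → ℝ) → Fin n → ℝ) : Prop :=
  ∀ x i, IsWeightedMedian x (W i) (Med x i) ∧
    ∀ m, IsWeightedMedian x (W i) m → |Med x i - x i| ≤ |m - x i|

/-- `φ` is the solution map of the ODE `ẋ = g(x)`: `φ x0` is the solution starting at `x0`. -/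
def IsFlow {n : ℕ} (g : (Fin n → ℝ) → (Fin n → ℝ))
    (φ : (Fin n → ℝ) → ℝ → (Fin n → ℝ)) : Prop :=
  ∀ x, φ x 0 = x ∧ ∀ t : ℝ, HasDerivAt (φ x) (g (φ x t)) t

/-- `order^{≤ r}(x)`: indices whose value is among the `r` largest distinct values of `x`. -/
noncomputable def orderLe {n : ℕ} (x : Fin n → ℝ) (r : ℕ) : Finset (Fin n) :=
  univ.filter (fun i => ((univ.image x).filter (fun v => x i < v)).card < r)

/-- The set of equilibria of the CTWM dynamics. -/
def Xeq {n : ℕ} (W : Matrix (Fin n) (Fin n) ℝ) : Set (Fin n → ℝ) :=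
  {x | ∀ r : ℕ, 1 ≤ r → r ≤ (univ.image x).card → MaxCohesive W (orderLe x r)}

/-- The ω-limit set of a trajectory `φ`. -/
def omegaLimitSet {n : ℕ} (φ : ℝ → (Fin n → ℝ)) : Set (Fin n → ℝ) :=
  {z | ∃ u : ℕ → ℝ, Tendsto u atTop atTop ∧ Tendsto (fun k => φ (u k)) atTop (𝓝 z)}

/-- The complement of a proper maximal cohesive set is maximal cohesive. -/
theorem compl_maxCohesive {n : ℕ} (W : Matrix (Fin n) (Fin n) ℝ) (hW : RowStochastic W)
    (M : Finset (Fin n)) (hM : MaxCohesive W M) (hMproper : M ≠ univ) :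
    MaxCohesive W Mᶜ := by
  obtain ⟨hcoh, hmax⟩ := hM
  have key : ∀ i, ∑ j ∈ Mᶜ, W i j = 1 - ∑ j ∈ M, W i j := by
    intro i
    have := hW.2 i
    have h := Finset.sum_add_sum_compl M (W i)
    linarith
  constructor
  · intro i hi
    have hi' : i ∉ M := by simpa using hi
    have := hmax i hi'
    rw [key i]
    linarith
  · intro i hi
    have hi' : i ∈ M := by simpa using hi
    have := hcoh i hi'
    rw [key i]
    linarith
end

section
/- Positive invariance of convex sets mapped into themselves: let X ⊂ ℝ^n be a closed convex set and F : ℝ^n → ℝ^n a Lipschitz continuous vector field such that F(x) ∈ X for all x ∈ X. Then X is positively invariant for the system ẋ = F(x) − x, i.e., every solution starting in X remains in X for all t ≥ 0. -/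
open Finset Filter Topology

/-- A closed convex set mapped into itself by `F` is positively invariant
for the system `ẋ = F(x) - x`. -/
theorem convex_closed_positively_invariant {n : ℕ}
    (X : Set (Fin n → ℝ)) (hXclosed : IsClosed X) (hXconvex : Convex ℝ X)
    (F : (Fin n → ℝ) → (Fin n → ℝ)) (K : NNReal) (hF : LipschitzWith K F)
    (hFX : ∀ x ∈ X, F x ∈ X)
    (φ : ℝ → (Fin n → ℝ)) (hφ0 : φ 0 ∈ X)
    (hode : ∀ t : ℝ, 0 ≤ t → HasDerivAt φ (F (φ t) - φ t) t) :
    ∀ t : ℝ, 0 ≤ t → φ t ∈ X := by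
  intro T hT
  set f : ℝ → ℝ := fun t => Metric.infDist (φ t) X with hfdef
  have hXne : X.Nonempty := ⟨φ 0, hφ0⟩
  have hfc : ContinuousOn f (Set.Icc 0 T) := fun t ht =>
    ((Metric.continuous_infDist_pt X).continuousAt.comp (hode t ht.1).continuousAt).continuousWithinAt
  have key : ∀ t ∈ Set.Icc (0:ℝ) T, f t ≤ gronwallBound 0 ((K:ℝ)+1) 0 (t - 0) := by
    apply le_gronwallBound_of_liminf_deriv_right_le (f' := fun t => ((K:ℝ)+1) * f t) hfc
    · intro t ht r hr
      obtain ⟨y, hyX, hyd⟩ := hXclosed.exists_infDist_eq_dist hXne (φ t)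
      have hd0 : 0 ≤ f t := Metric.infDist_nonneg
      have hKd : ((K:ℝ)-1) * f t ≤ ((K:ℝ)+1) * f t := by nlinarith
      set ε := (r - ((K:ℝ)-1) * f t)/2 with hεdef
      have hε : 0 < ε := by simp only [hεdef]; linarith
      have hlo := (hasDerivAt_iff_isLittleO.1 (hode t ht.1)).def hε
      have h1 : ∀ᶠ z in 𝓝[>] t, z - t < 1 := by
        have hz : Tendsto (fun z : ℝ => z - t) (𝓝 t) (𝓝 0) := by
          have : Tendsto (fun z : ℝ => z - t) (𝓝 t) (𝓝 (t - t)) :=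
            ((continuous_id.sub continuous_const).tendsto t)
          simpa using this
        exact (hz.eventually (eventually_lt_nhds one_pos)).filter_mono nhdsWithin_le_nhds
      have h2 : ∀ᶠ z in 𝓝[>] t,
          ‖φ z - φ t - (z - t) • (F (φ t) - φ t)‖ ≤ ε * ‖z - t‖ :=
        hlo.filter_mono nhdsWithin_le_nhds
      have h3 : ∀ᶠ z in 𝓝[>] t, (z - t)⁻¹ * (f z - f t) < r := by
        filter_upwards [h1, h2, self_mem_nhdsWithin] with z hz1 hz2 hz3
        have hh : 0 < z - t := sub_pos.2 hz3
        set h := z - t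
        have hq : (1 - h) • y + h • F y ∈ X :=
          hXconvex hyX (hFX y hyX) (by linarith) hh.le (by ring)
        have hfz : f z ≤ ‖φ z - ((1 - h) • y + h • F y)‖ := by
          simpa [dist_eq_norm] using Metric.infDist_le_dist_of_mem hq
        have hsplit : φ z - ((1 - h) • y + h • F y) =
            (φ z - φ t - h • (F (φ t) - φ t)) +
            ((1 - h) • (φ t - y) + h • (F (φ t) - F y)) := by
          module
        have hnorm : ‖φ z - ((1 - h) • y + h • F y)‖ ≤
            ε * h + (1 - h) * f t + h * K * f t := by
          rw [hsplit]
          have e1 : ‖φ z - φ t - h • (F (φ t) - φ t)‖ ≤ ε * h := by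
            simpa [abs_of_pos hh] using hz2
          have e2 : ‖(1 - h) • (φ t - y)‖ ≤ (1 - h) * f t := by
            rw [norm_smul, Real.norm_eq_abs, abs_of_nonneg (by linarith)]
            have : ‖φ t - y‖ = f t := by
              simp only [hfdef]; rw [hyd, dist_eq_norm]
            rw [this]
          have e3 : ‖h • (F (φ t) - F y)‖ ≤ h * K * f t := by
            rw [norm_smul, Real.norm_eq_abs, abs_of_pos hh]
            have : ‖F (φ t) - F y‖ ≤ K * f t := by
              have := hF.dist_le_mul (φ t) y
              rw [← hyd] at this
              simpa [dist_eq_norm] using this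
            nlinarith
          calc ‖_ + _‖ ≤ ‖φ z - φ t - h • (F (φ t) - φ t)‖ +
                ‖(1 - h) • (φ t - y) + h • (F (φ t) - F y)‖ := norm_add_le _ _
            _ ≤ ε * h + ((1 - h) * f t + h * K * f t) := by
                refine add_le_add e1 ((norm_add_le _ _).trans (add_le_add e2 e3))
            _ = ε * h + (1 - h) * f t + h * K * f t := by ring
        have hineq : f z - f t ≤ h * (ε + ((K:ℝ) - 1) * f t) := by nlinarith
        have : h⁻¹ * (f z - f t) ≤ ε + ((K:ℝ) - 1) * f t := by
          have h4 := mul_le_mul_of_nonneg_left hineq (inv_nonneg.2 hh.le)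
          rwa [inv_mul_cancel_left₀ hh.ne'] at h4
        have : ε + ((K:ℝ) - 1) * f t < r := by simp only [hεdef]; linarith
        linarith
      exact h3.frequently
    · exact le_of_eq (Metric.infDist_zero_of_mem hφ0)
    · intro x hx; simp
  have hfT : f T ≤ 0 := by
    have := key T ⟨hT, le_refl T⟩
    simpa [gronwallBound_ε0] using this
  have : f T = 0 := le_antisymm hfT Metric.infDist_nonneg
  exact (hXclosed.mem_iff_infDist_zero hXne).2 this
end

section
/- Exclusion from ω-limit sets via invariant neighborhoods: consider ẋ = f(x) with f : ℝ^n → ℝ^n globally Lipschitz, and let G ⊆ ℝ^n be compact and positively invariant. For a given x ∈ G, suppose there exists an open set B ⊆ G such that (1) x ∉ B ∪ ∂B, (2) there exists T > 0 with φ(T,x) ∈ B, and (3) B ∪ ∂B is positively invariant. Then x ∉ ω(y) for every y ∈ G. -/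
open Finset Filter Topology

lemma flow_semigroup {n : ℕ} {f : (Fin n → ℝ) → (Fin n → ℝ)} {K : NNReal}
    (hf : LipschitzWith K f) {φ : (Fin n → ℝ) → ℝ → (Fin n → ℝ)} (hφ : IsFlow f φ)
    (y : Fin n → ℝ) (s t : ℝ) (ht : 0 ≤ t) : φ y (s + t) = φ (φ y s) t := by
  have h1 : ∀ τ : ℝ, HasDerivAt (fun τ => φ y (s + τ)) (f (φ y (s + τ))) τ := by
    intro τ
    have h := (hφ y).2 (s + τ)
    have hc : HasDerivAt (fun τ : ℝ => s + τ) 1 τ := by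
      simpa using (hasDerivAt_id τ).const_add s
    have := h.scomp τ hc
    simpa [Function.comp_def] using this
  have key := ODE_solution_unique (v := fun _ z => f z) (K := K)
    (f := fun τ => φ y (s + τ)) (g := φ (φ y s)) (a := 0) (b := t)
    (fun _ => hf)
    (Continuous.continuousOn (by
      exact continuous_iff_continuousAt.2 fun τ => (h1 τ).continuousAt))
    (fun τ _ => (h1 τ).hasDerivWithinAt)
    (Continuous.continuousOn (by
      exact continuous_iff_continuousAt.2 fun τ => ((hφ (φ y s)).2 τ).continuousAt))
    (fun τ _ => ((hφ (φ y s)).2 τ).hasDerivWithinAt)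
    (by simp [(hφ (φ y s)).1])
  exact key ⟨ht, le_rfl⟩

lemma flow_dist {n : ℕ} {f : (Fin n → ℝ) → (Fin n → ℝ)} {K : NNReal}
    (hf : LipschitzWith K f) {φ : (Fin n → ℝ) → ℝ → (Fin n → ℝ)} (hφ : IsFlow f φ)
    (a b : Fin n → ℝ) (t : ℝ) (ht : 0 ≤ t) :
    dist (φ a t) (φ b t) ≤ dist a b * Real.exp (K * t) := by
  have key := dist_le_of_trajectories_ODE (v := fun _ z => f z) (K := K)
    (f := φ a) (g := φ b) (a := 0) (b := t) (δ := dist a b)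
    (fun _ => hf)
    (Continuous.continuousOn (by
      exact continuous_iff_continuousAt.2 fun τ => ((hφ a).2 τ).continuousAt))
    (fun τ _ => ((hφ a).2 τ).hasDerivWithinAt)
    (Continuous.continuousOn (by
      exact continuous_iff_continuousAt.2 fun τ => ((hφ b).2 τ).continuousAt))
    (fun τ _ => ((hφ b).2 τ).hasDerivWithinAt)
    (by simp [(hφ a).1, (hφ b).1])
  simpa using key t ⟨ht, le_rfl⟩

/-- Exclusion from ω-limit sets via positively invariant neighborhoods. -/
theorem not_mem_omegaLimit_of_invariant_nbhd {n : ℕ}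
    (f : (Fin n → ℝ) → (Fin n → ℝ)) (K : NNReal) (hf : LipschitzWith K f)
    (φ : (Fin n → ℝ) → ℝ → (Fin n → ℝ)) (hφ : IsFlow f φ)
    (G : Set (Fin n → ℝ)) (hGcompact : IsCompact G)
    (hGinv : ∀ y ∈ G, ∀ t : ℝ, 0 ≤ t → φ y t ∈ G)
    (x : Fin n → ℝ) (hx : x ∈ G)
    (B : Set (Fin n → ℝ)) (hBsub : B ⊆ G) (hBopen : IsOpen B)
    (hxnot : x ∉ B ∪ frontier B)
    (hT : ∃ T > (0:ℝ), φ x T ∈ B)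
    (hBinv : ∀ y ∈ B ∪ frontier B, ∀ t : ℝ, 0 ≤ t → φ y t ∈ B ∪ frontier B) :
    ∀ y ∈ G, x ∉ omegaLimitSet (φ y) := by
  intro y hy hmem
  obtain ⟨u, hu, hconv⟩ := hmem
  obtain ⟨T, hTpos, hTB⟩ := hT
  -- find ε-ball around φ x T inside B
  obtain ⟨ε, hε, hball⟩ := Metric.isOpen_iff.1 hBopen _ hTB
  set δ : ℝ := ε / Real.exp (K * T) with hδdef
  have hδpos : 0 < δ := div_pos hε (Real.exp_pos _)
  have hev : ∀ᶠ k in atTop, dist (φ y (u k)) x < δ :=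
    (Metric.tendsto_nhds.1 hconv) δ hδpos
  obtain ⟨k, hk⟩ := hev.exists
  -- at time u k + T the trajectory is in B
  have hstep : φ y (u k + T) ∈ B := by
    rw [flow_semigroup hf hφ y (u k) T hTpos.le]
    apply hball
    have hle := flow_dist hf hφ (φ y (u k)) x T hTpos.le
    have : dist (φ (φ y (u k)) T) (φ x T) < δ * Real.exp (K * T) :=
      lt_of_le_of_lt hle (by
        exact mul_lt_mul_of_pos_right hk (Real.exp_pos _))
    rw [Metric.mem_ball]
    calc dist (φ (φ y (u k)) T) (φ x T) < δ * Real.exp (K * T) := this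
      _ = ε := by
          rw [hδdef]; field_simp
  -- afterwards the trajectory stays in closure B
  have hev2 : ∀ᶠ j in atTop, φ y (u j) ∈ closure B := by
    filter_upwards [hu.eventually_ge_atTop (u k + T)] with j hj
    have h0 : (0:ℝ) ≤ u j - (u k + T) := by linarith
    have : φ y (u j) = φ (φ y (u k + T)) (u j - (u k + T)) := by
      have := flow_semigroup hf hφ y (u k + T) (u j - (u k + T)) h0
      simpa using this
    rw [this, closure_eq_self_union_frontier]
    exact hBinv _ (Or.inl hstep) _ h0
  have hxcl : x ∈ closure B := isClosed_closure.mem_of_tendsto hconv hev2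
  rw [closure_eq_self_union_frontier] at hxcl
  exact hxnot hxcl
end

section
/- The weighted-median operator is non-expanding: for any x, y ∈ ℝ^n, ‖Med(x;W) − Med(y;W)‖_∞ ≤ ‖x − y‖_∞. Consequently, the map f(x) = Med(x;W) − x is globally Lipschitz on ℝ^n, and for every initial condition x0 ∈ ℝ^n the solution φ(t,x0) of the CTWM dynamics exists and is unique for all t ≥ 0. -/
open Finset Filter Topology

section MedKeyAux

private lemma med_key {n : ℕ} {x y w : Fin n → ℝ} (hw : ∀ j, 0 ≤ w j) {c : ℝ}
    (hc : ∀ j, |x j - y j| ≤ c) (i : Fin n) {a b : ℝ}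
    (ha : IsWeightedMedian x w a) (hb : IsWeightedMedian y w b)
    (hamin : ∀ m, IsWeightedMedian x w m → |a - x i| ≤ |m - x i|)
    (hbmin : ∀ m, IsWeightedMedian y w m → |b - y i| ≤ |m - y i|) :
    b ≤ a + c := by
  by_contra h
  push_neg at h
  have hc' : ∀ j, x j - c ≤ y j ∧ y j - c ≤ x j := fun j => by
    have := abs_le.mp (hc j)
    constructor <;> linarith [this.1, this.2]
  rcases le_or_gt b (y i) with hyi | hyi
  · -- case b ≤ y i : work on the x side
    have hxi : a < x i := by have := (hc' i).2; linarith
    set T := univ.filter (fun j => a < x j) with hT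
    have hiT : i ∈ T := Finset.mem_filter.mpr ⟨Finset.mem_univ _, hxi⟩
    have hne : (T.image x).Nonempty := ⟨x i, Finset.mem_image_of_mem x hiT⟩
    set m := (T.image x).min' hne with hm
    obtain ⟨j1, hj1T, hj1⟩ := Finset.mem_image.mp ((T.image x).min'_mem hne)
    rw [← hm] at hj1
    have ham : a < m := by rw [← hj1]; exact (Finset.mem_filter.mp hj1T).2
    have hmxi : m ≤ x i := Finset.min'_le _ _ (Finset.mem_image_of_mem x hiT)
    have hmed : IsWeightedMedian x w m := by
      refine ⟨⟨j1, hj1⟩, ?_, ?_⟩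
      · refine le_trans (Finset.sum_le_sum_of_subset_of_nonneg ?_ (fun j _ _ => hw j)) hb.2.1
        intro j hj
        simp only [Finset.mem_filter, Finset.mem_univ, true_and] at hj ⊢
        have hxa : ¬ a < x j := fun hx =>
          absurd (Finset.min'_le _ _ (Finset.mem_image_of_mem x
            (Finset.mem_filter.mpr ⟨Finset.mem_univ _, hx⟩))) (not_le.mpr hj)
        push_neg at hxa
        have := (hc' j).2
        linarith
      · refine le_trans (Finset.sum_le_sum_of_subset_of_nonneg ?_ (fun j _ _ => hw j)) ha.2.2
        intro j hj
        simp only [Finset.mem_filter, Finset.mem_univ, true_and] at hj ⊢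
        linarith
    have hmin := hamin m hmed
    rw [abs_of_nonpos (by linarith), abs_of_nonpos (by linarith)] at hmin
    linarith
  · -- case y i < b : work on the y side
    set S := univ.filter (fun j => y j < b) with hS
    have hiS : i ∈ S := Finset.mem_filter.mpr ⟨Finset.mem_univ _, hyi⟩
    have hne : (S.image y).Nonempty := ⟨y i, Finset.mem_image_of_mem y hiS⟩
    set m := (S.image y).max' hne with hm
    obtain ⟨j1, hj1S, hj1⟩ := Finset.mem_image.mp ((S.image y).max'_mem hne)
    rw [← hm] at hj1
    have hmb : m < b := by rw [← hj1]; exact (Finset.mem_filter.mp hj1S).2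
    have hyim : y i ≤ m := Finset.le_max' _ _ (Finset.mem_image_of_mem y hiS)
    have hmed : IsWeightedMedian y w m := by
      refine ⟨⟨j1, hj1⟩, ?_, ?_⟩
      · refine le_trans (Finset.sum_le_sum_of_subset_of_nonneg ?_ (fun j _ _ => hw j)) hb.2.1
        intro j hj
        simp only [Finset.mem_filter, Finset.mem_univ, true_and] at hj ⊢
        linarith
      · refine le_trans (Finset.sum_le_sum_of_subset_of_nonneg ?_ (fun j _ _ => hw j)) ha.2.2
        intro j hj
        simp only [Finset.mem_filter, Finset.mem_univ, true_and] at hj ⊢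
        have hyb : ¬ y j < b := fun hx =>
          absurd (Finset.le_max' _ _ (Finset.mem_image_of_mem y
            (Finset.mem_filter.mpr ⟨Finset.mem_univ _, hx⟩))) (not_le.mpr hj)
        push_neg at hyb
        have := (hc' j).2
        linarith
    have hmin := hbmin m hmed
    rw [abs_of_nonneg (by linarith), abs_of_nonneg (by linarith)] at hmin
    linarith

end MedKeyAux

section ODEAux

open Set in
private lemma local_sol {E : Type*} [NormedAddCommGroup E] [NormedSpace ℝ E] [CompleteSpace E]
    {g : E → E} {L : NNReal} (hg : LipschitzWith L g) (p : ℝ × E) :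
    ∃ α : ℝ → E, α p.1 = p.2 ∧ ∀ t ∈ Set.Icc (p.1 - (1 + (L : ℝ))⁻¹) (p.1 + (1 + (L : ℝ))⁻¹),
      HasDerivWithinAt α (g (α t)) (Set.Icc (p.1 - (1 + (L : ℝ))⁻¹) (p.1 + (1 + (L : ℝ))⁻¹)) t := by
  obtain ⟨t0, x0⟩ := p
  set ε : ℝ := (1 + (L : ℝ))⁻¹ with hε
  have hL0 : (0 : ℝ) ≤ L := L.coe_nonneg
  have hε0 : 0 < ε := by positivity
  set R : ℝ := ‖g x0‖ + 1 with hR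
  have hR0 : 0 < R := by positivity
  have hpl : IsPicardLindelof (fun _ : ℝ => g) (tmin := t0 - ε) (tmax := t0 + ε)
      ⟨t0, by constructor <;> linarith⟩ x0 (Real.toNNReal R) 0
      (Real.toNNReal ((1 + (L : ℝ)) * R)) L := by
    apply IsPicardLindelof.of_time_independent
    · intro z hz
      rw [Real.coe_toNNReal _ hR0.le] at hz
      rw [Real.coe_toNNReal _ (by positivity)]
      have h1 : dist (g z) (g x0) ≤ (L : ℝ) * R := by
        refine le_trans (hg.dist_le_mul z x0) ?_
        exact mul_le_mul_of_nonneg_left (Metric.mem_closedBall.mp hz) hL0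
      have h2 : ‖g z‖ - ‖g x0‖ ≤ ‖g z - g x0‖ := norm_sub_norm_le _ _
      rw [← dist_eq_norm] at h2
      have h3 : ‖g x0‖ ≤ R := by rw [hR]; linarith
      nlinarith
    · exact hg.lipschitzOnWith
    · have hne : (1 + (L : ℝ)) ≠ 0 := by positivity
      have hkey : ((1 + (L : ℝ)) * R) * ε ≤ R := by
        rw [hε]
        field_simp
        rfl
      simpa [Real.coe_toNNReal _ hR0.le, Real.coe_toNNReal _ (by positivity : (0:ℝ) ≤ (1 + L) * R)] using hkey
  exact hpl.exists_eq_forall_mem_Icc_hasDerivWithinAt₀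

open Set in
private lemma global_sol {E : Type*} [NormedAddCommGroup E] [NormedSpace ℝ E] [CompleteSpace E]
    {g : E → E} {L : NNReal} (hg : LipschitzWith L g) (x0 : E) :
    ∃ φ : ℝ → E, φ 0 = x0 ∧ ∀ t : ℝ, 0 ≤ t → HasDerivAt φ (g (φ t)) t := by
  set ε : ℝ := (1 + (L : ℝ))⁻¹ with hε
  have hε0 : 0 < ε := by positivity
  choose sol hsol0 hsolD using fun (p : ℝ × E) => local_sol hg p
  let P : ℕ → E := fun k => Nat.rec x0 (fun k pk => sol ((k : ℝ) * ε, pk) (((k : ℝ) + 1) * ε)) k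
  let α : ℕ → ℝ → E := fun k => sol ((k : ℝ) * ε, P k)
  have hαinit : ∀ k, α k ((k : ℝ) * ε) = P k := fun k => hsol0 _
  have hPsucc : ∀ k : ℕ, α k (((k : ℝ) + 1) * ε) = P (k + 1) := fun k => rfl
  have hαD : ∀ k : ℕ, ∀ t ∈ Icc ((k : ℝ) * ε - ε) ((k : ℝ) * ε + ε),
      HasDerivWithinAt (α k) (g (α k t)) (Icc ((k : ℝ) * ε - ε) ((k : ℝ) * ε + ε)) t :=
    fun k => hsolD ((k : ℝ) * ε, P k)
  set φ : ℝ → E := fun t => α ⌊t / ε⌋₊ t with hφ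
  have hfloor : ∀ (k : ℕ) (t : ℝ), (k : ℝ) * ε ≤ t → t < ((k : ℝ) + 1) * ε → ⌊t / ε⌋₊ = k := by
    intro k t h1 h2
    have ht0 : 0 ≤ t := le_trans (by positivity) h1
    rw [Nat.floor_eq_iff (div_nonneg ht0 hε0.le)]
    constructor
    · rw [le_div_iff₀ hε0]; linarith
    · rw [div_lt_iff₀ hε0]; push_cast; linarith
  have hEq : ∀ k : ℕ, ∀ t ∈ Icc ((k : ℝ) * ε) (((k : ℝ) + 1) * ε), φ t = α k t := by
    intro k t ht
    rcases lt_or_eq_of_le ht.2 with h2 | h2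
    · show α ⌊t / ε⌋₊ t = α k t
      rw [hfloor k t ht.1 h2]
    · have hk1 : ⌊t / ε⌋₊ = k + 1 := by
        apply hfloor (k + 1) t
        · push_cast; linarith [h2]
        · push_cast; rw [h2]; push_cast; nlinarith
      show α ⌊t / ε⌋₊ t = α k t
      rw [hk1, h2, hPsucc k]
      rw [show ((k : ℝ) + 1) * ε = ((k + 1 : ℕ) : ℝ) * ε by push_cast; ring]
      exact hαinit (k + 1)
  have hA : ∀ k : ℕ, ∀ t ∈ Icc ((k : ℝ) * ε) (((k : ℝ) + 1) * ε),
      HasDerivWithinAt φ (g (φ t)) (Icc ((k : ℝ) * ε) (((k : ℝ) + 1) * ε)) t := by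
    intro k t ht
    have hsub : Icc ((k : ℝ) * ε) (((k : ℝ) + 1) * ε) ⊆ Icc ((k : ℝ) * ε - ε) ((k : ℝ) * ε + ε) := by
      apply Set.Icc_subset_Icc <;> nlinarith
    have h1 := (hαD k t (hsub ht)).mono hsub
    have h2 := h1.congr (fun s hs => hEq k s hs) (hEq k t ht)
    rwa [hEq k t ht]
  refine ⟨φ, ?_, ?_⟩
  · have : φ 0 = α 0 0 := by
      have := hEq 0 0 ⟨by simp, by simp [hε0.le]⟩
      simpa using this
    rw [this]
    have := hαinit 0
    simpa [P] using this
  · intro t ht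
    set k := ⌊t / ε⌋₊ with hk
    have hk1 : (k : ℝ) * ε ≤ t := by
      have h := Nat.floor_le (div_nonneg ht hε0.le)
      calc (k : ℝ) * ε ≤ (t / ε) * ε := mul_le_mul_of_nonneg_right h hε0.le
        _ = t := by field_simp
    have hk2 : t < ((k : ℝ) + 1) * ε := by
      have h := Nat.lt_floor_add_one (t / ε)
      calc t = (t / ε) * ε := by field_simp
        _ < ((k : ℝ) + 1) * ε := mul_lt_mul_of_pos_right h hε0
    rcases lt_or_eq_of_le hk1 with hlt | heq
    · exact (hA k t ⟨hk1, hk2.le⟩).hasDerivAt (Icc_mem_nhds hlt hk2)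
    · -- t = k * ε
      rcases Nat.eq_zero_or_eq_succ_pred k with hk0 | hksucc
      · -- k = 0, so t = 0
        have ht0 : t = 0 := by rw [← heq, hk0]; simp
        have hd : HasDerivAt (α 0) (g (α 0 t)) t := by
          apply (hαD 0 t (by rw [ht0]; constructor <;> simp [hε0.le])).hasDerivAt
          rw [ht0]
          apply Icc_mem_nhds <;> simp [hε0]
        have hev : φ =ᶠ[𝓝 t] α 0 := by
          have : Ioo (-ε) ε ∈ 𝓝 t := by rw [ht0]; exact Ioo_mem_nhds (by linarith) hε0
          filter_upwards [this] with s hs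
          show α ⌊s / ε⌋₊ s = α 0 s
          have : ⌊s / ε⌋₊ = 0 := by
            rw [Nat.floor_eq_zero]
            rw [div_lt_one hε0]
            exact hs.2
          rw [this]
        have := hd.congr_of_eventuallyEq hev
        have hφα : φ t = α 0 t := hev.self_of_nhds
        rwa [← hφα] at this
      · -- k = j + 1
        obtain ⟨j, hj⟩ : ∃ j, k = j + 1 := ⟨k - 1, hksucc⟩
        have htj : t = ((j : ℝ) + 1) * ε := by rw [← heq, hj]; push_cast; ring
        have hmemL : t ∈ Icc ((j : ℝ) * ε) (((j : ℝ) + 1) * ε) := by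
          constructor
          · rw [htj]; nlinarith
          · rw [htj]
        have hL := (hA j t hmemL).mono_of_mem_nhdsWithin (by
          rw [htj]
          exact Icc_mem_nhdsLE_of_mem ⟨by nlinarith, le_rfl⟩)
        have hmemR : t ∈ Icc ((k : ℝ) * ε) (((k : ℝ) + 1) * ε) := ⟨heq.le, hk2.le⟩
        have hR := (hA k t hmemR).mono_of_mem_nhdsWithin (by
          rw [← heq]
          exact Icc_mem_nhdsGE_of_mem ⟨le_rfl, by nlinarith⟩)
        rw [← htj] at hL
        rw [heq] at hR
        have := hL.union hR
        rwa [Set.Iic_union_Ici, hasDerivWithinAt_univ] at this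

end ODEAux

/-- The weighted-median operator is non-expanding in the sup norm; consequently
`f(x) = Med(x;W) - x` is globally Lipschitz and the CTWM dynamics has a unique
solution from every initial condition. -/
theorem med_nonexpanding_and_existence_uniqueness {n : ℕ}
    (W : Matrix (Fin n) (Fin n) ℝ) (hW : RowStochastic W)
    (Med : (Fin n → ℝ) → Fin n → ℝ) (hMed : IsMedSelection W Med) :
    (∀ x y : Fin n → ℝ, ‖Med x - Med y‖ ≤ ‖x - y‖) ∧
    (∃ K : NNReal, LipschitzWith K (fun x : Fin n → ℝ => Med x - x)) ∧
    ∀ x0 : Fin n → ℝ,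
      (∃ φ : ℝ → (Fin n → ℝ), φ 0 = x0 ∧
        ∀ t : ℝ, 0 ≤ t → HasDerivAt φ (Med (φ t) - φ t) t) ∧
      ∀ φ ψ : ℝ → (Fin n → ℝ),
        (φ 0 = x0 ∧ ∀ t : ℝ, 0 ≤ t → HasDerivAt φ (Med (φ t) - φ t) t) →
        (ψ 0 = x0 ∧ ∀ t : ℝ, 0 ≤ t → HasDerivAt ψ (Med (ψ t) - ψ t) t) →
        ∀ t : ℝ, 0 ≤ t → φ t = ψ t := by
    classical
  have hw : ∀ i j, 0 ≤ W i j := hW.1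
  have key : ∀ x y : Fin n → ℝ, ∀ i, |Med x i - Med y i| ≤ ‖x - y‖ := by
    intro x y i
    have hc : ∀ j, |x j - y j| ≤ ‖x - y‖ := fun j => by
      have := norm_le_pi_norm (x - y) j
      simpa [Real.norm_eq_abs] using this
    have hc2 : ∀ j, |y j - x j| ≤ ‖x - y‖ := fun j => by
      rw [abs_sub_comm]; exact hc j
    have h1 := med_key (fun j => hw i j) hc i (hMed x i).1 (hMed y i).1
      (hMed x i).2 (hMed y i).2
    have h2 := med_key (fun j => hw i j) hc2 i (hMed y i).1 (hMed x i).1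
      (hMed y i).2 (hMed x i).2
    rw [abs_sub_le_iff]
    constructor <;> linarith
  have part1 : ∀ x y : Fin n → ℝ, ‖Med x - Med y‖ ≤ ‖x - y‖ := by
    intro x y
    rw [pi_norm_le_iff_of_nonneg (norm_nonneg _)]
    intro i
    simpa [Real.norm_eq_abs] using key x y i
  have part2 : LipschitzWith 2 (fun x : Fin n → ℝ => Med x - x) := by
    apply LipschitzWith.of_dist_le_mul
    intro x y
    rw [dist_eq_norm, dist_eq_norm]
    have hrw : (Med x - x) - (Med y - y) = (Med x - Med y) - (x - y) := by abel
    rw [hrw]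
    have h0 := norm_sub_le (Med x - Med y) (x - y)
    have h1 := part1 x y
    push_cast
    linarith
  refine ⟨part1, ⟨2, part2⟩, ?_⟩
  intro x0
  constructor
  · obtain ⟨φ, hφ0, hφD⟩ := global_sol part2 x0
    exact ⟨φ, hφ0, fun t ht => hφD t ht⟩
  · intro φ ψ hφ hψ t ht
    have h := ODE_solution_unique (v := fun _ : ℝ => (fun x : Fin n → ℝ => Med x - x))
      (a := 0) (b := t) (K := 2) (fun _ => part2)
      (fun s hs => (hφ.2 s hs.1).continuousAt.continuousWithinAt)
      (fun s hs => (hφ.2 s hs.1).hasDerivWithinAt)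
      (fun s hs => (hψ.2 s hs.1).continuousAt.continuousWithinAt)
      (fun s hs => (hψ.2 s hs.1).hasDerivWithinAt)
      (by rw [hφ.1, hψ.1])
    exact h ⟨ht, le_rfl⟩
end

section
/- Invariance for cohesive sets: if C ⊆ V is a cohesive set of the influence network G(W), then for any a ≤ b (possibly ±∞) the set X_{C,[a,b]} = {x ∈ ℝ^n : x_i ∈ [a,b] for all i ∈ C} is positively invariant for the CTWM dynamics. In particular, for every x ∈ ℝ^n, t ↦ max_{k∈C} φ_k(t,x) is non-increasing and t ↦ min_{k∈C} φ_k(t,x) is non-decreasing on t ≥ 0. -/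
open Finset Filter Topology

section Aux

/-- `-inf = sup of neg` helper. -/
lemma sup'_neg_eq_neg_inf' {α : Type*} (C : Finset α) (hCne : C.Nonempty) (f : α → ℝ) :
    C.sup' hCne (fun k => -f k) = - C.inf' hCne f := by
  apply le_antisymm
  · rw [Finset.sup'_le_iff]
    intro b hb
    exact neg_le_neg (Finset.inf'_le f hb)
  · rw [neg_le, Finset.le_inf'_iff]
    intro b hb
    rw [neg_le]
    exact Finset.le_sup' (fun k => -f k) hb

/-- Core analytic lemma: if at every time the maximizers over `C` have nonpositive
derivative, then the max over `C` is non-increasing. -/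
lemma sup'_anti_of_deriv {n : ℕ} (C : Finset (Fin n)) (hCne : C.Nonempty)
    (p d : Fin n → ℝ → ℝ)
    (hd : ∀ k, ∀ t : ℝ, HasDerivAt (p k) (d k t) t)
    (hmax : ∀ t : ℝ, ∀ k ∈ C, (∀ j ∈ C, p j t ≤ p k t) → d k t ≤ 0) :
    ∀ s t : ℝ, s ≤ t → C.sup' hCne (fun k => p k t) ≤ C.sup' hCne (fun k => p k s) := by
  intro s t hst
  set g : ℝ → ℝ := fun u => C.sup' hCne (fun k => p k u) with hg
  have hgc : Continuous g := by
    apply Continuous.finset_sup'_apply hCne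
    intro k _
    exact continuous_iff_continuousAt.2 fun u => (hd k u).continuousAt
  have key := le_gronwallBound_of_liminf_deriv_right_le (f := g) (f' := fun _ => 0)
      (δ := g s) (K := 0) (ε := 0) (a := s) (b := t) hgc.continuousOn ?_ le_rfl ?_ t
      (Set.right_mem_Icc.2 hst)
  · simpa only [gronwallBound_K0, zero_mul, add_zero] using key
  · -- slope condition
    intro u _ r hr
    replace hr : (0:ℝ) < r := hr
    apply Filter.Eventually.frequently
    have hkey : ∀ k ∈ C, ∀ᶠ z in 𝓝[>] u, (z - u)⁻¹ * (p k z - g u) < r := by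
      intro k hk
      rcases lt_or_eq_of_le (Finset.le_sup' (fun j => p j u) hk) with hlt | heq
      · -- `k` is not a maximizer at `u`
        have h1 : ∀ᶠ z in 𝓝 u, p k z < g u :=
          (hd k u).continuousAt.eventually_lt continuousAt_const hlt
        filter_upwards [eventually_nhdsWithin_of_eventually_nhds h1,
          self_mem_nhdsWithin] with z hz hz'
        have hzu : (0:ℝ) < z - u := sub_pos.2 hz'
        have : (z - u)⁻¹ * (p k z - g u) < 0 :=
          mul_neg_of_pos_of_neg (inv_pos.2 hzu) (sub_neg.2 hz)
        linarith
      · -- `k` is a maximizer at `u`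
        have hm : ∀ j ∈ C, p j u ≤ p k u := by
          intro j hj
          rw [heq]
          exact Finset.le_sup' (fun l => p l u) hj
        have hd0 : d k u ≤ 0 := hmax u k hk hm
        have hslope : Filter.Tendsto (slope (p k) u) (𝓝[≠] u) (𝓝 (d k u)) :=
          hasDerivAt_iff_tendsto_slope.1 (hd k u)
        have h2 : ∀ᶠ z in 𝓝[≠] u, slope (p k) u z < r :=
          hslope.eventually_lt_const (lt_of_le_of_lt hd0 hr)
        have hle : 𝓝[>] u ≤ 𝓝[≠] u :=
          nhdsWithin_mono u fun z hz => ne_of_gt hz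
        filter_upwards [hle h2] with z hz
        have : slope (p k) u z = (z - u)⁻¹ * (p k z - g u) := by
          rw [slope_def_field, heq, div_eq_inv_mul]
        rwa [this] at hz
    have hall : ∀ᶠ z in 𝓝[>] u, ∀ k ∈ C, (z - u)⁻¹ * (p k z - g u) < r :=
      (Filter.eventually_all_finset C).2 hkey
    filter_upwards [hall] with z hz
    obtain ⟨k₀, hk₀, hgz⟩ := Finset.exists_mem_eq_sup' hCne (fun k => p k z)
    have : g z = p k₀ z := hgz
    rw [this]
    exact hz k₀ hk₀
  · intro x _
    simp

end Aux

section Med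

variable {n : ℕ} {W : Matrix (Fin n) (Fin n) ℝ} {Med : (Fin n → ℝ) → Fin n → ℝ}
  {C : Finset (Fin n)}

lemma med_le_max (hW : RowStochastic W) (hMed : IsMedSelection W Med)
    (hC : Cohesive W C) (x : Fin n → ℝ) {i : Fin n} (hi : i ∈ C)
    (hmax : ∀ j ∈ C, x j ≤ x i) : Med x i ≤ x i := by
  by_contra h
  push_neg at h
  have hxm : IsWeightedMedian x (W i) (x i) := by
    refine ⟨⟨i, rfl⟩, ?_, ?_⟩
    · calc ∑ j ∈ univ.filter (fun j => x j < x i), W i j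
          ≤ ∑ j ∈ univ.filter (fun j => x j < Med x i), W i j := by
            apply Finset.sum_le_sum_of_subset_of_nonneg
            · intro j hj
              simp only [Finset.mem_filter, Finset.mem_univ, true_and] at *
              exact lt_trans hj h
            · exact fun j _ _ => hW.1 i j
      _ ≤ 1/2 := ((hMed x i).1).2.1
    · have hdisj : Disjoint (univ.filter (fun j => x i < x j)) C := by
        rw [Finset.disjoint_left]
        intro j hj hjC
        simp only [Finset.mem_filter, Finset.mem_univ, true_and] at hj
        exact absurd (hmax j hjC) (not_le.2 hj)
      have hsum : ∑ j ∈ univ.filter (fun j => x i < x j), W i j + ∑ j ∈ C, W i j ≤ 1 := by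
        rw [← Finset.sum_union hdisj, ← hW.2 i]
        exact Finset.sum_le_sum_of_subset_of_nonneg (Finset.subset_univ _)
          (fun j _ _ => hW.1 i j)
      have hc := hC i hi
      linarith
  have hle := (hMed x i).2 (x i) hxm
  rw [sub_self, abs_zero, abs_nonpos_iff, sub_eq_zero] at hle
  exact absurd hle (ne_of_gt h)

lemma min_le_med (hW : RowStochastic W) (hMed : IsMedSelection W Med)
    (hC : Cohesive W C) (x : Fin n → ℝ) {i : Fin n} (hi : i ∈ C)
    (hmin : ∀ j ∈ C, x i ≤ x j) : x i ≤ Med x i := by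
  by_contra h
  push_neg at h
  have hxm : IsWeightedMedian x (W i) (x i) := by
    refine ⟨⟨i, rfl⟩, ?_, ?_⟩
    · have hdisj : Disjoint (univ.filter (fun j => x j < x i)) C := by
        rw [Finset.disjoint_left]
        intro j hj hjC
        simp only [Finset.mem_filter, Finset.mem_univ, true_and] at hj
        exact absurd (hmin j hjC) (not_le.2 hj)
      have hsum : ∑ j ∈ univ.filter (fun j => x j < x i), W i j + ∑ j ∈ C, W i j ≤ 1 := by
        rw [← Finset.sum_union hdisj, ← hW.2 i]
        exact Finset.sum_le_sum_of_subset_of_nonneg (Finset.subset_univ _)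
          (fun j _ _ => hW.1 i j)
      have hc := hC i hi
      linarith
    · calc ∑ j ∈ univ.filter (fun j => x i < x j), W i j
          ≤ ∑ j ∈ univ.filter (fun j => Med x i < x j), W i j := by
            apply Finset.sum_le_sum_of_subset_of_nonneg
            · intro j hj
              simp only [Finset.mem_filter, Finset.mem_univ, true_and] at *
              exact lt_trans h hj
            · exact fun j _ _ => hW.1 i j
      _ ≤ 1/2 := ((hMed x i).1).2.2
  have hle := (hMed x i).2 (x i) hxm
  rw [sub_self, abs_zero, abs_nonpos_iff, sub_eq_zero] at hle
  exact absurd hle (ne_of_lt h)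

end Med

/-- Invariance for cohesive sets: if `C` is cohesive, then for any (extended-real)
bounds `a ≤ b` the set `{x : xᵢ ∈ [a,b] ∀ i ∈ C}` is positively invariant for the
CTWM dynamics; in particular the max over `C` is non-increasing and the min over `C`
is non-decreasing along trajectories. -/
theorem cohesive_set_invariance {n : ℕ}
    (W : Matrix (Fin n) (Fin n) ℝ) (hW : RowStochastic W)
    (Med : (Fin n → ℝ) → Fin n → ℝ) (hMed : IsMedSelection W Med)
    (φ : (Fin n → ℝ) → ℝ → (Fin n → ℝ))
    (hφ : IsFlow (fun x => Med x - x) φ)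
    (C : Finset (Fin n)) (hC : Cohesive W C) :
    (∀ a b : EReal, a ≤ b →
      ∀ x0 : Fin n → ℝ, (∀ i ∈ C, a ≤ (x0 i : EReal) ∧ (x0 i : EReal) ≤ b) →
        ∀ t : ℝ, 0 ≤ t → ∀ i ∈ C, a ≤ (φ x0 t i : EReal) ∧ (φ x0 t i : EReal) ≤ b) ∧
    ∀ (hCne : C.Nonempty) (x0 : Fin n → ℝ),
      (∀ s t : ℝ, 0 ≤ s → s ≤ t →
        C.sup' hCne (fun k => φ x0 t k) ≤ C.sup' hCne (fun k => φ x0 s k)) ∧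
      (∀ s t : ℝ, 0 ≤ s → s ≤ t →
        C.inf' hCne (fun k => φ x0 s k) ≤ C.inf' hCne (fun k => φ x0 t k)) := by
  -- componentwise derivatives of the flow
  have hderiv : ∀ (x0 : Fin n → ℝ) (k : Fin n) (t : ℝ),
      HasDerivAt (fun u => φ x0 u k) (Med (φ x0 t) k - φ x0 t k) t := by
    intro x0 k t
    have := (hφ x0).2 t
    have h := hasDerivAt_pi.1 this k
    simpa using h
  -- max over C is non-increasing
  have hsup : ∀ (hCne : C.Nonempty) (x0 : Fin n → ℝ) (s t : ℝ), s ≤ t →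
      C.sup' hCne (fun k => φ x0 t k) ≤ C.sup' hCne (fun k => φ x0 s k) := by
    intro hCne x0 s t hst
    refine sup'_anti_of_deriv C hCne (fun k u => φ x0 u k)
      (fun k u => Med (φ x0 u) k - φ x0 u k) (fun k u => hderiv x0 k u) ?_ s t hst
    intro u k hk hm
    have := med_le_max hW hMed hC (φ x0 u) hk hm
    linarith
  -- min over C is non-decreasing
  have hinf : ∀ (hCne : C.Nonempty) (x0 : Fin n → ℝ) (s t : ℝ), s ≤ t →
      C.inf' hCne (fun k => φ x0 s k) ≤ C.inf' hCne (fun k => φ x0 t k) := by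
    intro hCne x0 s t hst
    have key := sup'_anti_of_deriv C hCne (fun k u => -(φ x0 u k))
      (fun k u => -(Med (φ x0 u) k - φ x0 u k))
      (fun k u => (hderiv x0 k u).neg) ?_ s t hst
    · rw [sup'_neg_eq_neg_inf' C hCne (fun k => φ x0 t k),
        sup'_neg_eq_neg_inf' C hCne (fun k => φ x0 s k)] at key
      linarith
    · intro u k hk hm
      have hmin : ∀ j ∈ C, φ x0 u k ≤ φ x0 u j := by
        intro j hj
        have := hm j hj
        linarith
      have := min_le_med hW hMed hC (φ x0 u) hk hmin
      linarith
  refine ⟨?_, fun hCne x0 => ⟨fun s t _ hst => hsup hCne x0 s t hst,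
    fun s t _ hst => hinf hCne x0 s t hst⟩⟩
  intro a b _ x0 hx0 t ht i hi
  have hCne : C.Nonempty := ⟨i, hi⟩
  have h0 : φ x0 0 = x0 := (hφ x0).1
  constructor
  · -- lower bound
    obtain ⟨j, hj, hjeq⟩ := Finset.exists_mem_eq_inf' hCne (fun k => φ x0 0 k)
    have h0j : φ x0 0 j = x0 j := congrFun h0 j
    have h1 : x0 j ≤ φ x0 t i := by
      calc x0 j = C.inf' hCne (fun k => φ x0 0 k) := by rw [hjeq, h0j]
        _ ≤ C.inf' hCne (fun k => φ x0 t k) := hinf hCne x0 0 t ht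
        _ ≤ φ x0 t i := Finset.inf'_le _ hi
    calc a ≤ (x0 j : EReal) := (hx0 j hj).1
      _ ≤ (φ x0 t i : EReal) := EReal.coe_le_coe_iff.2 h1
  · -- upper bound
    obtain ⟨j, hj, hjeq⟩ := Finset.exists_mem_eq_sup' hCne (fun k => φ x0 0 k)
    have h1 : φ x0 t i ≤ x0 j := by
      calc φ x0 t i ≤ C.sup' hCne (fun k => φ x0 t k) := Finset.le_sup' _ hi
        _ ≤ C.sup' hCne (fun k => φ x0 0 k) := hsup hCne x0 0 t ht
        _ = x0 j := by rw [hjeq]; exact congrFun h0 j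
    calc (φ x0 t i : EReal) ≤ (x0 j : EReal) := EReal.coe_le_coe_iff.2 h1
      _ ≤ b := (hx0 j hj).2
end

section
/- Characterization of equilibria of the CTWM dynamics: a point x ∈ ℝ^n satisfies Med(x;W) = x (equivalently, f(x) = 0) if and only if x ∈ X_eq, i.e., if and only if order^{≤r}(x) is a maximal cohesive set of G(W) for every r ∈ {1,…,N_diff(x)}. -/
open Finset Filter Topology

section AuxCTWM

variable {n : ℕ}

/-- Number of distinct values strictly above `x i`. -/
noncomputable def cntAbove (x : Fin n → ℝ) (i : Fin n) : ℕ :=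
  ((univ.image x).filter (fun v => x i < v)).card

lemma cntAbove_le_of_le {x : Fin n → ℝ} {i j : Fin n} (h : x i ≤ x j) :
    cntAbove x j ≤ cntAbove x i :=
  Finset.card_le_card (Finset.monotone_filter_right _ (fun v _ hv => lt_of_le_of_lt h hv))

lemma cntAbove_lt_of_lt {x : Fin n → ℝ} {i j : Fin n} (h : x i < x j) :
    cntAbove x j < cntAbove x i := by
  apply Finset.card_lt_card
  refine (Finset.ssubset_iff_of_subset
    (Finset.monotone_filter_right _ (fun v _ hv => lt_trans h hv))).mpr ?_
  refine ⟨x j, ?_, ?_⟩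
  · exact Finset.mem_filter.mpr ⟨Finset.mem_image.mpr ⟨j, Finset.mem_univ j, rfl⟩, h⟩
  · intro hc
    exact lt_irrefl (x j) (Finset.mem_filter.mp hc).2

lemma cntAbove_lt_iff {x : Fin n → ℝ} {i j : Fin n} :
    cntAbove x j < cntAbove x i ↔ x i < x j := by
  constructor
  · intro h
    by_contra hc
    exact absurd h (not_lt.mpr (cntAbove_le_of_le (not_lt.mp hc)))
  · exact cntAbove_lt_of_lt

lemma cntAbove_le_iff {x : Fin n → ℝ} {i j : Fin n} :
    cntAbove x j ≤ cntAbove x i ↔ x i ≤ x j := by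
  constructor
  · intro h
    by_contra hc
    exact absurd h (not_le.mpr (cntAbove_lt_of_lt (not_le.mp hc)))
  · exact cntAbove_le_of_le

lemma mem_orderLe_iff {x : Fin n → ℝ} {r : ℕ} {j : Fin n} :
    j ∈ orderLe x r ↔ cntAbove x j < r := by
  simp [orderLe, cntAbove]

lemma cntAbove_lt_card {x : Fin n → ℝ} (i : Fin n) :
    cntAbove x i < (univ.image x).card := by
  apply Finset.card_lt_card
  refine (Finset.ssubset_iff_of_subset (Finset.filter_subset _ _)).mpr ?_
  refine ⟨x i, Finset.mem_image.mpr ⟨i, Finset.mem_univ i, rfl⟩, ?_⟩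
  intro hc
  exact lt_irrefl (x i) (Finset.mem_filter.mp hc).2

lemma sum_ge_half {W : Matrix (Fin n) (Fin n) ℝ} (hW : RowStochastic W)
    {x : Fin n → ℝ} (i : Fin n)
    (hA : ∑ j ∈ univ.filter (fun j => x j < x i), W i j ≤ 1 / 2) :
    (1 : ℝ) / 2 ≤ ∑ j ∈ univ.filter (fun j => x i ≤ x j), W i j := by
  have hsplit := Finset.sum_filter_add_sum_filter_not univ (fun j => x j < x i) (W i)
  rw [hW.2 i] at hsplit
  have heq : univ.filter (fun j => ¬ x j < x i) = univ.filter (fun j => x i ≤ x j) := by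
    apply Finset.filter_congr
    intro j _
    simp [not_lt]
  rw [heq] at hsplit
  linarith

end AuxCTWM

/-- Characterization of the equilibria of the CTWM dynamics: `Med(x;W) = x` if and only
if `order^{≤r}(x)` is a maximal cohesive set for every `r ∈ {1,…,N_diff(x)}`. -/
theorem ctwm_equilibria_characterization {n : ℕ}
    (W : Matrix (Fin n) (Fin n) ℝ) (hW : RowStochastic W)
    (Med : (Fin n → ℝ) → Fin n → ℝ) (hMed : IsMedSelection W Med)
    (x : Fin n → ℝ) :
    Med x = x ↔ x ∈ Xeq W := by
  constructor
  · -- forward direction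
    intro hfix
    have hmed : ∀ i, IsWeightedMedian x (W i) (x i) := by
      intro i
      have h := (hMed x i).1
      rwa [congrFun hfix i] at h
    intro r _ _
    constructor
    · -- cohesive
      intro i hi
      have hci : cntAbove x i < r := mem_orderLe_iff.mp hi
      have hsub : univ.filter (fun j => x i ≤ x j) ⊆ orderLe x r := by
        intro j hj
        have hxj : x i ≤ x j := (Finset.mem_filter.mp hj).2
        exact mem_orderLe_iff.mpr (lt_of_le_of_lt (cntAbove_le_of_le hxj) hci)
      calc (1 : ℝ) / 2 ≤ ∑ j ∈ univ.filter (fun j => x i ≤ x j), W i j :=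
            sum_ge_half hW i (hmed i).2.1
        _ ≤ ∑ j ∈ orderLe x r, W i j :=
            Finset.sum_le_sum_of_subset_of_nonneg hsub (fun j _ _ => hW.1 i j)
    · -- maximality
      intro i hi
      have hci : r ≤ cntAbove x i := not_lt.mp (fun h => hi (mem_orderLe_iff.mpr h))
      have hsub : orderLe x r ⊆ univ.filter (fun j => x i < x j) := by
        intro j hj
        have hcj : cntAbove x j < r := mem_orderLe_iff.mp hj
        exact Finset.mem_filter.mpr ⟨Finset.mem_univ j,
          cntAbove_lt_iff.mp (lt_of_lt_of_le hcj hci)⟩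
      have hle : ∑ j ∈ orderLe x r, W i j
          ≤ ∑ j ∈ univ.filter (fun j => x i < x j), W i j :=
        Finset.sum_le_sum_of_subset_of_nonneg hsub (fun j _ _ => hW.1 i j)
      have hB := (hmed i).2.2
      exact not_lt.mpr (le_trans hle hB)
  · -- backward direction
    intro hXeq
    funext i
    have hmed : IsWeightedMedian x (W i) (x i) := by
      refine ⟨⟨i, rfl⟩, ?_, ?_⟩
      · -- lower sum ≤ 1/2
        have hr1 : 1 ≤ cntAbove x i + 1 := Nat.le_add_left 1 _
        have hrN : cntAbove x i + 1 ≤ (univ.image x).card :=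
          Nat.succ_le_of_lt (cntAbove_lt_card i)
        obtain ⟨hcoh, _⟩ := hXeq _ hr1 hrN
        have hiMem : i ∈ orderLe x (cntAbove x i + 1) :=
          mem_orderLe_iff.mpr (Nat.lt_succ_self _)
        have heq : orderLe x (cntAbove x i + 1) = univ.filter (fun j => x i ≤ x j) := by
          ext j
          rw [mem_orderLe_iff, Finset.mem_filter]
          constructor
          · intro h
            exact ⟨Finset.mem_univ j, cntAbove_le_iff.mp (Nat.lt_succ_iff.mp h)⟩
          · intro h
            exact Nat.lt_succ_of_le (cntAbove_le_iff.mpr h.2)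
        have h2 := hcoh i hiMem
        rw [heq] at h2
        have hsplit := Finset.sum_filter_add_sum_filter_not univ (fun j => x j < x i) (W i)
        rw [hW.2 i] at hsplit
        have heq2 : univ.filter (fun j => ¬ x j < x i)
            = univ.filter (fun j => x i ≤ x j) := by
          apply Finset.filter_congr
          intro j _
          simp [not_lt]
        rw [heq2] at hsplit
        linarith
      · -- upper sum ≤ 1/2
        rcases Nat.eq_zero_or_pos (cntAbove x i) with h0 | hpos
        · have hempty : univ.filter (fun j => x i < x j) = (∅ : Finset (Fin n)) := by
            apply Finset.filter_eq_empty_iff.mpr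
            intro j _ hlt
            have : x j ∈ (univ.image x).filter (fun v => x i < v) :=
              Finset.mem_filter.mpr ⟨Finset.mem_image.mpr ⟨j, Finset.mem_univ j, rfl⟩, hlt⟩
            rw [show (univ.image x).filter (fun v => x i < v) = ∅ from
              Finset.card_eq_zero.mp h0] at this
            exact absurd this (Finset.notMem_empty _)
          rw [hempty, Finset.sum_empty]
          norm_num
        · have hrN : cntAbove x i ≤ (univ.image x).card :=
            le_of_lt (cntAbove_lt_card i)
          obtain ⟨_, hmax⟩ := hXeq _ hpos hrN
          have hiNot : i ∉ orderLe x (cntAbove x i) := by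
            intro hc
            exact lt_irrefl _ (mem_orderLe_iff.mp hc)
          have heq : orderLe x (cntAbove x i) = univ.filter (fun j => x i < x j) := by
            ext j
            rw [mem_orderLe_iff, Finset.mem_filter]
            constructor
            · intro h
              exact ⟨Finset.mem_univ j, cntAbove_lt_iff.mp h⟩
            · intro h
              exact cntAbove_lt_iff.mpr h.2
          have h2 := hmax i hiNot
          rw [heq] at h2
          exact not_lt.mp h2
    have hle := (hMed x i).2 (x i) hmed
    rw [sub_self, abs_zero] at hle
    have : |Med x i - x i| = 0 := le_antisymm hle (abs_nonneg _)
    have := abs_eq_zero.mp this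
    linarith [sub_eq_zero.mp this]
end

section
/- Stability of equilibria of the CTWM dynamics: every equilibrium x* ∈ X_eq is Lyapunov stable; more precisely, for every ε > 0 and every x0 with ‖x0 − x*‖_∞ ≤ ε, the solution satisfies ‖φ(t,x0) − x*‖_∞ ≤ ε for all t ≥ 0. -/
open Finset Filter Topology

lemma key_rank {n : ℕ} (xs : Fin n → ℝ) (a b : Fin n) :
    ((univ.image xs).filter (fun v => xs b < v)).card ≤
      ((univ.image xs).filter (fun v => xs a < v)).card ↔ xs a ≤ xs b := by
  constructor
  · intro h
    by_contra hc
    push_neg at hc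
    have hsub : (univ.image xs).filter (fun v => xs a < v) ⊆
        (univ.image xs).filter (fun v => xs b < v) := by
      intro v hv
      simp only [Finset.mem_filter] at *
      exact ⟨hv.1, lt_trans hc hv.2⟩
    have hss : (univ.image xs).filter (fun v => xs a < v) ⊂
        (univ.image xs).filter (fun v => xs b < v) := by
      rw [Finset.ssubset_iff_of_subset hsub]
      refine ⟨xs a, ?_, ?_⟩
      · simp only [Finset.mem_filter]
        exact ⟨Finset.mem_image_of_mem xs (Finset.mem_univ a), hc⟩
      · simp only [Finset.mem_filter]
        intro hmem
        exact lt_irrefl _ hmem.2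
    exact absurd h (not_le.mpr (Finset.card_lt_card hss))
  · intro h
    apply Finset.card_le_card
    intro v hv
    simp only [Finset.mem_filter] at *
    exact ⟨hv.1, lt_of_le_of_lt h hv.2⟩

lemma xeq_half {n : ℕ} (W : Matrix (Fin n) (Fin n) ℝ) (hW : RowStochastic W)
    (xs : Fin n → ℝ) (hxs : xs ∈ Xeq W) (i : Fin n) :
    (1:ℝ)/2 ≤ ∑ j ∈ univ.filter (fun j => xs i ≤ xs j), W i j ∧
    (1:ℝ)/2 ≤ ∑ j ∈ univ.filter (fun j => xs j ≤ xs i), W i j := by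
  set k : Fin n → ℕ := fun a => ((univ.image xs).filter (fun v => xs a < v)).card with hk
  have himem : ∀ a : Fin n, xs a ∈ univ.image xs :=
    fun a => Finset.mem_image_of_mem xs (Finset.mem_univ a)
  have hcard : ∀ a : Fin n, k a < (univ.image xs).card := by
    intro a
    apply Finset.card_lt_card
    rw [Finset.ssubset_iff_of_subset (Finset.filter_subset _ _)]
    exact ⟨xs a, himem a, by simp⟩
  constructor
  · have hset1 : orderLe xs (k i + 1) = univ.filter (fun j => xs i ≤ xs j) := by
      ext j
      simp only [orderLe, Finset.mem_filter, Finset.mem_univ, true_and, Nat.lt_succ_iff]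
      exact key_rank xs i j
    have hmax := hxs (k i + 1) (by omega) (by have := hcard i; omega)
    rw [hset1] at hmax
    exact hmax.1 i (by simp)
  · by_cases h0 : k i = 0
    · have : univ.filter (fun j => xs j ≤ xs i) = (univ : Finset (Fin n)) := by
        ext j
        simp only [Finset.mem_filter, Finset.mem_univ, true_and, iff_true]
        by_contra hc
        push_neg at hc
        have : xs j ∈ (univ.image xs).filter (fun v => xs i < v) := by
          simp only [Finset.mem_filter]
          exact ⟨himem j, hc⟩
        have hpos := Finset.card_pos.mpr ⟨xs j, this⟩
        have h0' : ((univ.image xs).filter (fun v => xs i < v)).card = 0 := h0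
        omega
      rw [this, hW.2 i]
      norm_num
    · have hset2 : orderLe xs (k i) = univ.filter (fun j => xs i < xs j) := by
        ext j
        simp only [orderLe, Finset.mem_filter, Finset.mem_univ, true_and]
        constructor
        · intro hlt
          by_contra hc
          push_neg at hc
          exact absurd ((key_rank xs j i).mpr hc) (not_le.mpr hlt)
        · intro hlt
          by_contra hc
          push_neg at hc
          exact absurd ((key_rank xs j i).mp hc) (not_le.mpr hlt)
      have hmax := hxs (k i) (by omega) (le_of_lt (hcard i))
      rw [hset2] at hmax
      have hnot := hmax.2 i (by simp)
      push_neg at hnot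
      have hsplit := Finset.sum_filter_add_sum_filter_not univ (fun j => xs i < xs j) (W i)
      rw [hW.2 i] at hsplit
      have : univ.filter (fun j => ¬ xs i < xs j) = univ.filter (fun j => xs j ≤ xs i) := by
        ext j; simp [not_lt]
      rw [this] at hsplit
      linarith

lemma med_bound {n : ℕ} (W : Matrix (Fin n) (Fin n) ℝ) (hW : RowStochastic W)
    (Med : (Fin n → ℝ) → Fin n → ℝ) (hMed : IsMedSelection W Med)
    (xs : Fin n → ℝ) (hxs : xs ∈ Xeq W)
    (ρ : ℝ) (x : Fin n → ℝ) (hx : ∀ j, |x j - xs j| ≤ ρ) (i : Fin n) :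
    |Med x i - xs i| ≤ ρ := by
  obtain ⟨hA1, hA2⟩ := xeq_half W hW xs hxs i
  obtain ⟨hmedi, hmin⟩ := hMed x i
  obtain ⟨_, hlow, hhigh⟩ := hmedi
  have hxi := abs_le.mp (hx i)
  rw [abs_le]
  constructor
  · -- lower bound : -ρ ≤ Med x i - xs i
    by_contra hc
    push_neg at hc
    have hMlt : Med x i < xs i - ρ := by linarith
    -- A = indices with xs i - ρ ≤ x j ; take its min value
    have hiA : i ∈ univ.filter (fun j => xs i - ρ ≤ x j) := by
      simp only [Finset.mem_filter, Finset.mem_univ, true_and]; linarith [hxi.1]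
    obtain ⟨j0, hj0A, hj0min⟩ := Finset.exists_min_image
      (univ.filter (fun j => xs i - ρ ≤ x j)) x ⟨i, hiA⟩
    simp only [Finset.mem_filter, Finset.mem_univ, true_and] at hj0A
    have hxij0 : x j0 ≤ x i := hj0min i hiA
    have hm'med : IsWeightedMedian x (W i) (x j0) := by
      refine ⟨⟨j0, rfl⟩, ?_, ?_⟩
      · -- values below x j0 are below xs i - ρ, hence their xs is < xs i
        have hsub : univ.filter (fun j => x j < x j0) ⊆
            univ.filter (fun j => ¬ xs i ≤ xs j) := by
          intro j hj
          simp only [Finset.mem_filter, Finset.mem_univ, true_and] at *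
          intro hge
          have h1 := (abs_le.mp (hx j)).1
          have h2 : xs i - ρ ≤ x j := by linarith
          exact absurd (hj0min j (by simp [h2])) (not_le.mpr hj)
        have hle := Finset.sum_le_sum_of_subset_of_nonneg hsub
          (fun j _ _ => hW.1 i j)
        have hsplit := Finset.sum_filter_add_sum_filter_not univ
          (fun j => xs i ≤ xs j) (W i)
        rw [hW.2 i] at hsplit
        linarith
      · have hsub : univ.filter (fun j => x j0 < x j) ⊆
            univ.filter (fun j => Med x i < x j) := by
          intro j hj
          simp only [Finset.mem_filter, Finset.mem_univ, true_and] at *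
          linarith
        have hle := Finset.sum_le_sum_of_subset_of_nonneg hsub
          (fun j _ _ => hW.1 i j)
        linarith
    have := hmin (x j0) hm'med
    have h1 : |x j0 - x i| = x i - x j0 := by rw [abs_sub_comm]; exact abs_of_nonneg (by linarith)
    have h2 : |Med x i - x i| = x i - Med x i := by
      rw [abs_sub_comm]; exact abs_of_nonneg (by linarith)
    rw [h1, h2] at this
    linarith
  · -- upper bound : Med x i - xs i ≤ ρ
    by_contra hc
    push_neg at hc
    have hMgt : xs i + ρ < Med x i := by linarith
    have hiA : i ∈ univ.filter (fun j => x j ≤ xs i + ρ) := by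
      simp only [Finset.mem_filter, Finset.mem_univ, true_and]; linarith [hxi.2]
    obtain ⟨j0, hj0A, hj0max⟩ := Finset.exists_max_image
      (univ.filter (fun j => x j ≤ xs i + ρ)) x ⟨i, hiA⟩
    simp only [Finset.mem_filter, Finset.mem_univ, true_and] at hj0A
    have hxij0 : x i ≤ x j0 := hj0max i hiA
    have hm'med : IsWeightedMedian x (W i) (x j0) := by
      refine ⟨⟨j0, rfl⟩, ?_, ?_⟩
      · have hsub : univ.filter (fun j => x j < x j0) ⊆
            univ.filter (fun j => x j < Med x i) := by
          intro j hj
          simp only [Finset.mem_filter, Finset.mem_univ, true_and] at *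
          linarith
        have hle := Finset.sum_le_sum_of_subset_of_nonneg hsub
          (fun j _ _ => hW.1 i j)
        linarith
      · have hsub : univ.filter (fun j => x j0 < x j) ⊆
            univ.filter (fun j => ¬ xs j ≤ xs i) := by
          intro j hj
          simp only [Finset.mem_filter, Finset.mem_univ, true_and] at *
          intro hge
          have h1 := (abs_le.mp (hx j)).2
          have h2 : x j ≤ xs i + ρ := by linarith
          exact absurd (hj0max j (by simp [h2])) (not_le.mpr hj)
        have hle := Finset.sum_le_sum_of_subset_of_nonneg hsub
          (fun j _ _ => hW.1 i j)
        have hsplit := Finset.sum_filter_add_sum_filter_not univ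
          (fun j => xs j ≤ xs i) (W i)
        rw [hW.2 i] at hsplit
        linarith
    have := hmin (x j0) hm'med
    have h1 : |x j0 - x i| = x j0 - x i := abs_of_nonneg (by linarith)
    have h2 : |Med x i - x i| = Med x i - x i := abs_of_nonneg (by linarith)
    rw [h1, h2] at this
    linarith

lemma stability_step {n : ℕ}
    (W : Matrix (Fin n) (Fin n) ℝ) (hW : RowStochastic W)
    (Med : (Fin n → ℝ) → Fin n → ℝ) (hMed : IsMedSelection W Med)
    (φ : (Fin n → ℝ) → ℝ → (Fin n → ℝ))
    (hφ : IsFlow (fun x => Med x - x) φ)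
    (xs : Fin n → ℝ) (hxs : xs ∈ Xeq W)
    (x0 : Fin n → ℝ) (ε ε' T : ℝ) (hε : 0 < ε) (hεε' : ε < ε')
    (h0 : ‖x0 - xs‖ ≤ ε) (hT : 0 < T)
    (hband : ∀ s ∈ Set.Icc (0:ℝ) T, ‖φ x0 s - xs‖ ≤ ε') :
    ‖φ x0 T - xs‖ < ε' := by
  have hε'pos : 0 < ε' := lt_trans hε hεε'
  rw [pi_norm_lt_iff hε'pos]
  intro i
  simp only [Pi.sub_apply, Real.norm_eq_abs, abs_lt]
  have hco : ∀ s : ℝ, HasDerivAt (fun u => φ x0 u i) (Med (φ x0 s) i - φ x0 s i) s := by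
    intro s
    have := (hasDerivAt_pi.mp ((hφ x0).2 s)) i
    simpa using this
  have hx0i : |x0 i - xs i| ≤ ε := by
    have := norm_le_pi_norm (x0 - xs) i
    simp only [Pi.sub_apply, Real.norm_eq_abs] at this
    exact this.trans h0
  have hmedb : ∀ s ∈ Set.Ioo (0:ℝ) T, |Med (φ x0 s) i - xs i| ≤ ε' := by
    intro s hs
    apply med_bound W hW Med hMed xs hxs ε' (φ x0 s) _ i
    intro j
    have := norm_le_pi_norm (φ x0 s - xs) j
    simp only [Pi.sub_apply, Real.norm_eq_abs] at this
    exact this.trans (hband s ⟨hs.1.le, hs.2.le⟩)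
  constructor
  · -- -ε' < φ x0 T i - xs i : use monotone g
    set g : ℝ → ℝ := fun s => Real.exp s * (φ x0 s i - xs i + ε') with hg
    have hg' : ∀ s : ℝ, HasDerivAt g (Real.exp s * (Med (φ x0 s) i - xs i + ε')) s := by
      intro s
      have h1 := ((hco s).sub_const (xs i)).add_const ε'
      have h2 := (Real.hasDerivAt_exp s).mul h1
      exact h2.congr_deriv (by ring)
    have hdiff : Differentiable ℝ g := fun s => (hg' s).differentiableAt
    have hmono : MonotoneOn g (Set.Icc 0 T) := by
      apply monotoneOn_of_deriv_nonneg (convex_Icc 0 T)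
        hdiff.continuous.continuousOn hdiff.differentiableOn
      intro s hs
      rw [interior_Icc] at hs
      rw [(hg' s).deriv]
      have := (abs_le.mp (hmedb s hs)).1
      have hnn : 0 ≤ Med (φ x0 s) i - xs i + ε' := by linarith
      exact mul_nonneg (Real.exp_pos s).le hnn
    have hfT := hmono (Set.left_mem_Icc.mpr hT.le) (Set.right_mem_Icc.mpr hT.le) hT.le
    have hg0 : g 0 = x0 i - xs i + ε' := by
      simp [hg, (hφ x0).1]
    rw [hg0] at hfT
    have h1 : 0 < x0 i - xs i + ε' := by
      have := (abs_le.mp hx0i).1; linarith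
    have h2' : 0 < Real.exp T * (φ x0 T i - xs i + ε') := lt_of_lt_of_le h1 hfT
    by_contra hcon
    push_neg at hcon
    have h3 : Real.exp T * (φ x0 T i - xs i + ε') ≤ 0 :=
      mul_nonpos_iff.mpr (Or.inl ⟨(Real.exp_pos T).le, by linarith⟩)
    linarith
  · -- φ x0 T i - xs i < ε' : use antitone f
    set f : ℝ → ℝ := fun s => Real.exp s * (φ x0 s i - xs i - ε') with hf
    have hf' : ∀ s : ℝ, HasDerivAt f (Real.exp s * (Med (φ x0 s) i - xs i - ε')) s := by
      intro s
      have h1 := ((hco s).sub_const (xs i)).sub_const ε'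
      have h2 := (Real.hasDerivAt_exp s).mul h1
      exact h2.congr_deriv (by ring)
    have hdiff : Differentiable ℝ f := fun s => (hf' s).differentiableAt
    have hanti : AntitoneOn f (Set.Icc 0 T) := by
      apply antitoneOn_of_deriv_nonpos (convex_Icc 0 T)
        hdiff.continuous.continuousOn hdiff.differentiableOn
      intro s hs
      rw [interior_Icc] at hs
      rw [(hf' s).deriv]
      have := (abs_le.mp (hmedb s hs)).2
      have hnp : Med (φ x0 s) i - xs i - ε' ≤ 0 := by linarith
      exact mul_nonpos_iff.mpr (Or.inl ⟨(Real.exp_pos s).le, hnp⟩)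
    have hfT := hanti (Set.left_mem_Icc.mpr hT.le) (Set.right_mem_Icc.mpr hT.le) hT.le
    have hf0 : f 0 = x0 i - xs i - ε' := by
      simp [hf, (hφ x0).1]
    rw [hf0] at hfT
    have h1 : x0 i - xs i - ε' < 0 := by
      have := (abs_le.mp hx0i).2; linarith
    have h2' : Real.exp T * (φ x0 T i - xs i - ε') < 0 := lt_of_le_of_lt hfT h1
    by_contra hcon
    push_neg at hcon
    have h3 : 0 ≤ Real.exp T * (φ x0 T i - xs i - ε') :=
      mul_nonneg (Real.exp_pos T).le (by linarith)
    linarith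

/-- Every equilibrium of the CTWM dynamics is Lyapunov stable: trajectories starting
within `ε` (in the sup norm) of the equilibrium stay within `ε` for all times. -/
theorem ctwm_equilibria_stable {n : ℕ}
    (W : Matrix (Fin n) (Fin n) ℝ) (hW : RowStochastic W)
    (Med : (Fin n → ℝ) → Fin n → ℝ) (hMed : IsMedSelection W Med)
    (φ : (Fin n → ℝ) → ℝ → (Fin n → ℝ))
    (hφ : IsFlow (fun x => Med x - x) φ)
    (xs : Fin n → ℝ) (hxs : xs ∈ Xeq W) :
    ∀ ε > (0:ℝ), ∀ x0 : Fin n → ℝ, ‖x0 - xs‖ ≤ ε →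
      ∀ t : ℝ, 0 ≤ t → ‖φ x0 t - xs‖ ≤ ε := by
  intro ε hε x0 hx0 t ht
  by_contra hcon
  push_neg at hcon
  set ε' : ℝ := (ε + ‖φ x0 t - xs‖)/2 with hε'def
  have hεε' : ε < ε' := by rw [hε'def]; linarith
  have hε'lt : ε' < ‖φ x0 t - xs‖ := by rw [hε'def]; linarith
  have hcont : Continuous fun s => ‖φ x0 s - xs‖ := by
    have hdiff : Differentiable ℝ (φ x0) := fun s => ((hφ x0).2 s).differentiableAt
    exact (hdiff.continuous.sub continuous_const).norm
  set B : Set ℝ := {s | 0 ≤ s ∧ ε' < ‖φ x0 s - xs‖} with hB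
  have hne : B.Nonempty := ⟨t, ht, hε'lt⟩
  have hbb : BddBelow B := ⟨0, fun b hb => hb.1⟩
  set T := sInf B with hTdef
  have hT0 : 0 ≤ T := le_csInf hne (fun b hb => hb.1)
  have hTle : ∀ s, 0 ≤ s → s < T → ‖φ x0 s - xs‖ ≤ ε' := by
    intro s hs hsT
    by_contra hgt
    push_neg at hgt
    exact absurd (csInf_le hbb ⟨hs, hgt⟩) (not_le.mpr hsT)
  have hopen : ∀ u : ℝ, ‖φ x0 u - xs‖ < ε' →
      ∃ δ > 0, ∀ s : ℝ, |s - u| < δ → ‖φ x0 s - xs‖ < ε' := by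
    intro u hu
    have h1 : ∀ᶠ s in 𝓝 u, ‖φ x0 s - xs‖ < ε' :=
      (hcont.tendsto u).eventually (gt_mem_nhds hu)
    rw [Metric.eventually_nhds_iff] at h1
    obtain ⟨δ, hδ, hball⟩ := h1
    exact ⟨δ, hδ, fun s hs => hball (by rwa [Real.dist_eq])⟩
  have hTpos : 0 < T := by
    have hu0 : ‖φ x0 0 - xs‖ < ε' := by rw [(hφ x0).1]; exact lt_of_le_of_lt hx0 hεε'
    obtain ⟨δ, hδ, hball⟩ := hopen 0 hu0
    have hδT : δ ≤ T := by
      apply le_csInf hne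
      intro b hb
      by_contra hb'
      push_neg at hb'
      have habs : |b - 0| < δ := by
        rw [sub_zero, abs_of_nonneg hb.1]; exact hb'
      exact absurd hb.2 (not_lt.mpr (hball b habs).le)
    linarith
  have hband : ∀ s ∈ Set.Icc (0:ℝ) T, ‖φ x0 s - xs‖ ≤ ε' := by
    intro s hs
    rcases eq_or_lt_of_le hs.2 with heq | hlt
    · rw [heq]
      have htd : Tendsto (fun u => ‖φ x0 u - xs‖) (𝓝[<] T) (𝓝 (‖φ x0 T - xs‖)) :=
        (hcont.tendsto T).mono_left nhdsWithin_le_nhds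
      refine le_of_tendsto htd ?_
      filter_upwards [Ioo_mem_nhdsLT hTpos] with u hu
      exact hTle u hu.1.le hu.2
    · exact hTle s hs.1 hlt
  have hstepT : ‖φ x0 T - xs‖ < ε' :=
    stability_step W hW Med hMed φ hφ xs hxs x0 ε ε' T hε hεε' hx0 hTpos hband
  obtain ⟨δ2, hδ2, hball2⟩ := hopen T hstepT
  have hlb : T + δ2 ≤ T := by
    apply le_csInf hne
    intro b hb
    by_contra hb'
    push_neg at hb'
    have hbT : T ≤ b := csInf_le hbb hb
    have habs : |b - T| < δ2 := by
      rw [abs_of_nonneg (by linarith)]; linarith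
    exact absurd hb.2 (not_lt.mpr (hball2 b habs).le)
  linarith
end

section
/- Global convergence of the CTWM dynamics: for every initial condition x0 ∈ ℝ^n there exists an equilibrium x* ∈ X_eq (depending on x0) such that the solution φ(t,x0) converges to x* as t → ∞. -/
open Finset Filter Topology

section CTWMAux

variable {n : ℕ} {W : Matrix (Fin n) (Fin n) ℝ} {Med : (Fin n → ℝ) → Fin n → ℝ}

private lemma sum_subset_le (hW : RowStochastic W) (i : Fin n) {A B : Finset (Fin n)}
    (h : A ⊆ B) : ∑ l ∈ A, W i l ≤ ∑ l ∈ B, W i l :=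
  Finset.sum_le_sum_of_subset_of_nonneg h (fun l _ _ => hW.1 i l)

private lemma mass_split (hW : RowStochastic W) (i : Fin n) (p : Fin n → Prop)
    [DecidablePred p] :
    ∑ l ∈ univ.filter p, W i l + ∑ l ∈ univ.filter (fun l => ¬ p l), W i l = 1 := by
  rw [Finset.sum_filter_add_sum_filter_not, hW.2 i]

private lemma medA (hW : RowStochastic W) (hMed : IsMedSelection W Med)
    {x : Fin n → ℝ} {y : ℝ} {i : Fin n}
    (h : 1/2 < ∑ l ∈ univ.filter (fun l => y ≤ x l), W i l) : y ≤ Med x i := by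
  by_contra hlt
  push_neg at hlt
  obtain ⟨_, _, hup⟩ := (hMed x i).1
  have hsub : univ.filter (fun l => y ≤ x l) ⊆ univ.filter (fun l => Med x i < x l) := by
    intro l hl
    simp only [mem_filter, mem_univ, true_and] at *
    exact lt_of_lt_of_le hlt hl
  have := sum_subset_le hW i hsub
  linarith

private lemma medA' (hW : RowStochastic W) (hMed : IsMedSelection W Med)
    {x : Fin n → ℝ} {y : ℝ} {i : Fin n}
    (h : 1/2 < ∑ l ∈ univ.filter (fun l => x l ≤ y), W i l) : Med x i ≤ y := by
  by_contra hlt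
  push_neg at hlt
  obtain ⟨_, hlo, _⟩ := (hMed x i).1
  have hsub : univ.filter (fun l => x l ≤ y) ⊆ univ.filter (fun l => x l < Med x i) := by
    intro l hl
    simp only [mem_filter, mem_univ, true_and] at *
    exact lt_of_le_of_lt hl hlt
  have := sum_subset_le hW i hsub
  linarith

private lemma medB (hW : RowStochastic W) (hMed : IsMedSelection W Med)
    {x : Fin n → ℝ} {y : ℝ} {i : Fin n}
    (h : 1/2 ≤ ∑ l ∈ univ.filter (fun l => y ≤ x l), W i l) (hxi : y ≤ x i) :
    y ≤ Med x i := by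
  by_contra hlt
  push_neg at hlt
  have hiE : i ∈ univ.filter (fun l => y ≤ x l) := by simp [hxi]
  obtain ⟨l0, hl0E, hl0min⟩ :=
    Finset.exists_min_image (univ.filter (fun l => y ≤ x l)) x ⟨i, hiE⟩
  have hyv : y ≤ x l0 := (Finset.mem_filter.mp hl0E).2
  have hvxi : x l0 ≤ x i := hl0min i hiE
  have hmed : IsWeightedMedian x (W i) (x l0) := by
    refine ⟨⟨l0, rfl⟩, ?_, ?_⟩
    · have hsub : univ.filter (fun l => x l < x l0) ⊆ univ.filter (fun l => ¬ y ≤ x l) := by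
        intro l hl
        simp only [mem_filter, mem_univ, true_and] at *
        intro hyl
        exact absurd (hl0min l (by simp [hyl])) (not_le.mpr hl)
      have h1 := sum_subset_le hW i hsub
      have h2 := mass_split hW i (fun l => y ≤ x l)
      linarith
    · obtain ⟨_, _, hup⟩ := (hMed x i).1
      have hsub : univ.filter (fun l => x l0 < x l) ⊆ univ.filter (fun l => Med x i < x l) := by
        intro l hl
        simp only [mem_filter, mem_univ, true_and] at *
        linarith
      exact le_trans (sum_subset_le hW i hsub) hup
  have hcl := (hMed x i).2 _ hmed
  rw [abs_of_nonpos (by linarith), abs_of_nonpos (by linarith)] at hcl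
  linarith

private lemma medB' (hW : RowStochastic W) (hMed : IsMedSelection W Med)
    {x : Fin n → ℝ} {y : ℝ} {i : Fin n}
    (h : 1/2 ≤ ∑ l ∈ univ.filter (fun l => x l ≤ y), W i l) (hxi : x i ≤ y) :
    Med x i ≤ y := by
  by_contra hlt
  push_neg at hlt
  have hiE : i ∈ univ.filter (fun l => x l ≤ y) := by simp [hxi]
  obtain ⟨l0, hl0E, hl0max⟩ :=
    Finset.exists_max_image (univ.filter (fun l => x l ≤ y)) x ⟨i, hiE⟩
  have hyv : x l0 ≤ y := (Finset.mem_filter.mp hl0E).2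
  have hvxi : x i ≤ x l0 := hl0max i hiE
  have hmed : IsWeightedMedian x (W i) (x l0) := by
    refine ⟨⟨l0, rfl⟩, ?_, ?_⟩
    · obtain ⟨_, hlo, _⟩ := (hMed x i).1
      have hsub : univ.filter (fun l => x l < x l0) ⊆ univ.filter (fun l => x l < Med x i) := by
        intro l hl
        simp only [mem_filter, mem_univ, true_and] at *
        linarith
      exact le_trans (sum_subset_le hW i hsub) hlo
    · have hsub : univ.filter (fun l => x l0 < x l) ⊆ univ.filter (fun l => ¬ x l ≤ y) := by
        intro l hl
        simp only [mem_filter, mem_univ, true_and] at *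
        intro hyl
        exact absurd (hl0max l (by simp [hyl])) (not_le.mpr hl)
      have h1 := sum_subset_le hW i hsub
      have h2 := mass_split hW i (fun l => x l ≤ y)
      linarith
  have hcl := (hMed x i).2 _ hmed
  rw [abs_of_nonneg (by linarith), abs_of_nonneg (by linarith)] at hcl
  linarith

/-- If the strict upper mass at `x i` is at most `1/2`, the selected median is `≤ x i`. -/
private lemma medCle (hW : RowStochastic W) (hMed : IsMedSelection W Med)
    {x : Fin n → ℝ} {i : Fin n}
    (h : ∑ l ∈ univ.filter (fun l => x i < x l), W i l ≤ 1/2) : Med x i ≤ x i := by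
  rcases le_or_gt (∑ l ∈ univ.filter (fun l => x l < x i), W i l) (1/2) with hlo | hlo
  · have hmed : IsWeightedMedian x (W i) (x i) := ⟨⟨i, rfl⟩, hlo, h⟩
    have hcl := (hMed x i).2 _ hmed
    simp only [sub_self, abs_zero] at hcl
    have := abs_nonneg (Med x i - x i)
    have h0 : |Med x i - x i| = 0 := le_antisymm hcl this
    have := abs_eq_zero.mp h0
    linarith [this]
  · obtain ⟨l0, hl0E, hl0max⟩ :=
      Finset.exists_max_image (univ.filter (fun l => x l < x i)) x
        (by
          rcases Finset.eq_empty_or_nonempty (univ.filter (fun l => x l < x i)) with he | hne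
          · rw [he] at hlo; simp at hlo; linarith
          · exact hne)
    have h1 : Med x i ≤ x l0 := by
      apply medA' hW hMed
      have hsub : univ.filter (fun l => x l < x i) ⊆ univ.filter (fun l => x l ≤ x l0) := by
        intro l hl
        simp only [mem_filter, mem_univ, true_and] at *
        exact hl0max l (by simp [hl])
      exact lt_of_lt_of_le hlo (sum_subset_le hW i hsub)
    have h2 : x l0 < x i := (Finset.mem_filter.mp hl0E).2
    linarith

private lemma medCge (hW : RowStochastic W) (hMed : IsMedSelection W Med)
    {x : Fin n → ℝ} {i : Fin n}
    (h : ∑ l ∈ univ.filter (fun l => x l < x i), W i l ≤ 1/2) : x i ≤ Med x i := by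
  rcases le_or_gt (∑ l ∈ univ.filter (fun l => x i < x l), W i l) (1/2) with hup | hup
  · have hmed : IsWeightedMedian x (W i) (x i) := ⟨⟨i, rfl⟩, h, hup⟩
    have hcl := (hMed x i).2 _ hmed
    simp only [sub_self, abs_zero] at hcl
    have h0 : |Med x i - x i| = 0 := le_antisymm hcl (abs_nonneg _)
    have := abs_eq_zero.mp h0
    linarith [this]
  · obtain ⟨l0, hl0E, hl0min⟩ :=
      Finset.exists_min_image (univ.filter (fun l => x i < x l)) x
        (by
          rcases Finset.eq_empty_or_nonempty (univ.filter (fun l => x i < x l)) with he | hne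
          · rw [he] at hup; simp at hup; linarith
          · exact hne)
    have h1 : x l0 ≤ Med x i := by
      apply medA hW hMed
      have hsub : univ.filter (fun l => x i < x l) ⊆ univ.filter (fun l => x l0 ≤ x l) := by
        intro l hl
        simp only [mem_filter, mem_univ, true_and] at *
        exact hl0min l (by simp [hl])
      exact lt_of_lt_of_le hup (sum_subset_le hW i hsub)
    have h2 : x i < x l0 := (Finset.mem_filter.mp hl0E).2
    linarith

/-- Rising strictly means strict majority strictly above. -/
private lemma medC (hW : RowStochastic W) (hMed : IsMedSelection W Med)
    {x : Fin n → ℝ} {i : Fin n} (h : x i < Med x i) :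
    1/2 < ∑ l ∈ univ.filter (fun l => x i < x l), W i l := by
  by_contra hc
  push_neg at hc
  exact absurd (medCle hW hMed hc) (not_le.mpr h)

private lemma medC' (hW : RowStochastic W) (hMed : IsMedSelection W Med)
    {x : Fin n → ℝ} {i : Fin n} (h : Med x i < x i) :
    1/2 < ∑ l ∈ univ.filter (fun l => x l < x i), W i l := by
  by_contra hc
  push_neg at hc
  exact absurd (medCge hW hMed hc) (not_le.mpr h)


/-- One-sided comparison: the median selection is topical, hence sup-norm nonexpansive. -/
private lemma medComp (hW : RowStochastic W) (hMed : IsMedSelection W Med)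
    {x z : Fin n → ℝ} {δ : ℝ} (hxz : ∀ l, x l ≤ z l + δ) (i : Fin n) :
    Med x i ≤ Med z i + δ := by
  by_contra hc
  push_neg at hc
  obtain ⟨⟨lp, hlp⟩, hplo, hpup⟩ := (hMed x i).1
  obtain ⟨⟨lq, hlq⟩, hqlo, hqup⟩ := (hMed z i).1
  -- v := greatest x-entry ≤ Med z i + δ; witness lq
  have hlqx : x lq ≤ Med z i + δ := by
    have := hxz lq
    rw [hlq] at this
    exact this
  obtain ⟨lv, hlvE, hlvmax⟩ :=
    Finset.exists_max_image (univ.filter (fun l => x l ≤ Med z i + δ)) x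
      ⟨lq, by simp [hlqx]⟩
  have hvle : x lv ≤ Med z i + δ := (Finset.mem_filter.mp hlvE).2
  -- v is an x-median
  have hvmed : IsWeightedMedian x (W i) (x lv) := by
    refine ⟨⟨lv, rfl⟩, ?_, ?_⟩
    · -- lower tail ⊆ lower tail of Med x i   (x lv < Med x i)
      have hsub : univ.filter (fun l => x l < x lv) ⊆ univ.filter (fun l => x l < Med x i) := by
        intro l hl
        simp only [mem_filter, mem_univ, true_and] at *
        linarith
      exact le_trans (sum_subset_le hW i hsub) hplo
    · -- upper tail ⊆ {Med z i < z l}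
      have hsub : univ.filter (fun l => x lv < x l) ⊆ univ.filter (fun l => Med z i < z l) := by
        intro l hl
        simp only [mem_filter, mem_univ, true_and] at *
        by_contra hzl
        push_neg at hzl
        have hxl : x l ≤ Med z i + δ := le_trans (hxz l) (by linarith)
        exact absurd (hlvmax l (by simp [hxl])) (not_le.mpr hl)
      exact le_trans (sum_subset_le hW i hsub) hqup
  rcases le_or_gt (x i) (Med z i + δ) with hxi | hxi
  · -- case 1 : x i below the bar, so x lv ≥ x i; closeness contradiction
    have hxiv : x i ≤ x lv := hlvmax i (by simp [hxi])
    have hcl := (hMed x i).2 _ hvmed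
    have h1 : |x lv - x i| = x lv - x i := abs_of_nonneg (by linarith)
    have h2 : Med x i - x i ≤ |Med x i - x i| := le_abs_self _
    -- Med x i - x i > Med z i + δ - x i ≥ x lv - x i
    rw [h1] at hcl
    linarith
  · -- case 2 : x i > Med z i + δ
    have hmass : ∑ l ∈ univ.filter (fun l => x l < min (Med x i) (x i)), W i l ≤ 1/2 := by
      rcases le_or_gt (Med x i) (x i) with hpxi | hpxi
      · rw [min_eq_left hpxi]; exact hplo
      · rw [min_eq_right hpxi.le]
        by_contra hbig
        push_neg at hbig
        obtain ⟨l0, hl0E, hl0max⟩ :=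
          Finset.exists_max_image (univ.filter (fun l => x l < x i)) x
            (by
              rcases Finset.eq_empty_or_nonempty (univ.filter (fun l => x l < x i)) with he | hne
              · rw [he] at hbig; simp at hbig; linarith
              · exact hne)
        have h1 : Med x i ≤ x l0 := by
          apply medA' hW hMed
          have hsub : univ.filter (fun l => x l < x i) ⊆ univ.filter (fun l => x l ≤ x l0) := by
            intro l hl
            simp only [mem_filter, mem_univ, true_and] at *
            exact hl0max l (by simp [hl])
          exact lt_of_lt_of_le hbig (sum_subset_le hW i hsub)
        have h2 : x l0 < x i := (Finset.mem_filter.mp hl0E).2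
        linarith
    set θ := min (Med x i) (x i) with hθ
    have hθq : Med z i + δ < θ := lt_min hc hxi
    -- u := least z-entry ≥ θ - δ ; witness z i
    have hziw : θ - δ ≤ z i := by
      have h1 := hxz i
      have h2 : θ ≤ x i := min_le_right _ _
      linarith
    obtain ⟨lu, hluF, hlumin⟩ :=
      Finset.exists_min_image (univ.filter (fun l => θ - δ ≤ z l)) z ⟨i, by simp only [mem_filter, mem_univ, true_and]; linarith⟩
    have hule : θ - δ ≤ z lu := (Finset.mem_filter.mp hluF).2
    have huzi : z lu ≤ z i := hlumin i (by simp only [mem_filter, mem_univ, true_and]; linarith)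
    have huq : Med z i < z lu := by linarith
    have humed : IsWeightedMedian z (W i) (z lu) := by
      refine ⟨⟨lu, rfl⟩, ?_, ?_⟩
      · -- lower tail ⊆ {x l < θ}
        have hsub : univ.filter (fun l => z l < z lu) ⊆
            univ.filter (fun l => x l < θ) := by
          intro l hl
          simp only [mem_filter, mem_univ, true_and] at *
          have hzl : z l < θ - δ := by
            by_contra hge
            push_neg at hge
            exact absurd (hlumin l (by simp [hge])) (not_le.mpr hl)
          have := hxz l
          linarith
        exact le_trans (sum_subset_le hW i hsub) hmass
      · -- upper tail ⊆ {Med z i < z l}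
        have hsub : univ.filter (fun l => z lu < z l) ⊆
            univ.filter (fun l => Med z i < z l) := by
          intro l hl
          simp only [mem_filter, mem_univ, true_and] at *
          linarith
        exact le_trans (sum_subset_le hW i hsub) hqup
    have hcl := (hMed z i).2 _ humed
    rw [abs_of_nonpos (by linarith), abs_of_nonpos (by linarith)] at hcl
    linarith

/-- The median of a constant vector is that constant. -/
private lemma medConst (hMed : IsMedSelection W Med) (c : ℝ) (i : Fin n) :
    Med (fun _ => c) i = c := by
  obtain ⟨⟨l, hl⟩, _, _⟩ := (hMed (fun _ => c) i).1
  exact hl.symm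




private lemma gronwall {n : ℕ} (C : Finset (Fin n)) (u u' : Fin n → ℝ → ℝ)
    (hu : ∀ l ∈ C, ∀ t : ℝ, HasDerivAt (u l) (u' l t) t)
    {c t0 : ℝ}
    (H : ∀ t, t0 ≤ t → (∀ l ∈ C, u l t ≤ c) → ∀ l ∈ C, u' l t ≤ c - u l t)
    (h0 : ∀ l ∈ C, u l t0 < c) :
    ∀ t, t0 ≤ t → ∀ l ∈ C, u l t < c := by
  by_contra hbad
  push_neg at hbad
  obtain ⟨t2, ht2, l2, hl2, hl2c⟩ := hbad
  have hcont : ∀ l ∈ C, Continuous (u l) := fun l hl =>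
    continuous_iff_continuousAt.mpr (fun t => (hu l hl t).continuousAt)
  set A : Set ℝ := {t | t0 ≤ t ∧ ∃ l ∈ C, c ≤ u l t} with hA
  have hAne : A.Nonempty := ⟨t2, ht2, l2, hl2, hl2c⟩
  have hAbdd : BddBelow A := ⟨t0, fun t ht => ht.1⟩
  have hAclosed : IsClosed A := by
    have h1 : A = {t | t0 ≤ t} ∩ ⋃ l ∈ (C : Set (Fin n)), {t | c ≤ u l t} := by
      ext t
      simp only [hA, Set.mem_setOf_eq, Set.mem_inter_iff, Set.mem_iUnion, Finset.mem_coe,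
        exists_prop]
    rw [h1]
    refine (isClosed_le continuous_const continuous_id).inter ?_
    exact Set.Finite.isClosed_biUnion (C : Set (Fin n)).toFinite
      (fun l hl => isClosed_le continuous_const (hcont l (Finset.mem_coe.mp hl)))
  set t1 := sInf A with ht1
  have ht1A : t1 ∈ A := hAclosed.csInf_mem hAne hAbdd
  have ht01 : t0 ≤ t1 := ht1A.1
  have ht1ne : t0 < t1 := by
    rcases eq_or_lt_of_le ht01 with he | hlt
    · exfalso
      obtain ⟨_, l, hl, hcl⟩ := ht1A
      rw [← he] at hcl
      exact absurd hcl (not_le.mpr (h0 l hl))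
    · exact hlt
  have hbefore : ∀ t, t0 ≤ t → t < t1 → ∀ l ∈ C, u l t < c := by
    intro t ht ht' l hl
    by_contra hge
    push_neg at hge
    have : t1 ≤ t := csInf_le hAbdd ⟨ht, l, hl, hge⟩
    linarith
  have hIcc : ∀ t ∈ Set.Icc t0 t1, ∀ l ∈ C, u l t ≤ c := by
    intro t ht l hl
    rcases lt_or_eq_of_le ht.2 with hlt | heq
    · exact (hbefore t ht.1 hlt l hl).le
    · subst heq
      have htd : Filter.Tendsto (u l) (𝓝[Set.Iio t1] t1) (𝓝 (u l t1)) :=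
        ((hcont l hl).tendsto t1).mono_left nhdsWithin_le_nhds
      refine le_of_tendsto htd ?_
      have hmem : Set.Ioo t0 t1 ∈ 𝓝[<] t1 :=
        Ioo_mem_nhdsLT_of_mem ⟨ht1ne, le_refl t1⟩
      exact Filter.mem_of_superset hmem
        (fun s hs => (hbefore s hs.1.le hs.2 l hl).le)
  -- exponential estimate on [t0, t1]
  have hlast : ∀ l ∈ C, u l t1 < c := by
    intro l hl
    have hv : ∀ t : ℝ, HasDerivAt (fun s => Real.exp s * (u l s - c))
        (Real.exp t * (u l t - c) + Real.exp t * (u' l t)) t := by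
      intro t
      exact (Real.hasDerivAt_exp t).mul ((hu l hl t).sub_const c)
    have hanti : AntitoneOn (fun s => Real.exp s * (u l s - c)) (Set.Icc t0 t1) := by
      apply antitoneOn_of_deriv_nonpos (convex_Icc t0 t1)
      · exact (Continuous.mul Real.continuous_exp ((hcont l hl).sub continuous_const)).continuousOn
      · intro t _
        exact ((hv t).differentiableAt).differentiableWithinAt
      · intro t ht
        rw [interior_Icc] at ht
        rw [(hv t).deriv]
        have hder := H t ht.1.le (fun l' hl' => hIcc t ⟨ht.1.le, ht.2.le⟩ l' hl') l hl
        have hexp := Real.exp_pos t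
        nlinarith
    have h1 : Real.exp t1 * (u l t1 - c) ≤ Real.exp t0 * (u l t0 - c) :=
      hanti (Set.left_mem_Icc.mpr ht01) (Set.right_mem_Icc.mpr ht01) ht01
    have h2 : Real.exp t0 * (u l t0 - c) < 0 :=
      mul_neg_of_pos_of_neg (Real.exp_pos t0) (by linarith [h0 l hl])
    have h3 : Real.exp t1 * (u l t1 - c) < 0 := lt_of_le_of_lt h1 h2
    nlinarith [Real.exp_pos t1]
  obtain ⟨_, l, hl, hcl⟩ := ht1A
  exact absurd hcl (not_le.mpr (hlast l hl))

/-- `X` is a (global, classical) solution of the CTWM dynamics. -/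
private def IsSol {n : ℕ} (Med : (Fin n → ℝ) → Fin n → ℝ) (X : ℝ → Fin n → ℝ) : Prop :=
  ∀ (t : ℝ) (i : Fin n), HasDerivAt (fun s => X s i) (Med (X t) i - X t i) t

private lemma isSol_of_flow {φ : (Fin n → ℝ) → ℝ → (Fin n → ℝ)}
    (hφ : IsFlow (fun x => Med x - x) φ) (x0 : Fin n → ℝ) : IsSol Med (φ x0) := by
  intro t i
  have h := (hφ x0).2 t
  rw [hasDerivAt_pi] at h
  simpa using h i

private lemma isSol_shift {X : ℝ → Fin n → ℝ} (hX : IsSol Med X) (a : ℝ) :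
    IsSol Med (fun t => X (t + a)) := by
  intro t i
  have h := hX (t + a) i
  have hg : HasDerivAt (fun s : ℝ => s + a) 1 t := (hasDerivAt_id t).add_const a
  have := HasDerivAt.comp t h hg
  simpa [Function.comp_def] using this

private lemma isSol_const {p : Fin n → ℝ} (hp : ∀ i, Med p i = p i) :
    IsSol Med (fun _ => p) := by
  intro t i
  have : Med p i - p i = 0 := by rw [hp i]; ring
  rw [this]
  exact hasDerivAt_const t (p i)

private lemma sol_comp_strict (hW : RowStochastic W) (hMed : IsMedSelection W Med)
    {X Z : ℝ → Fin n → ℝ} (hX : IsSol Med X) (hZ : IsSol Med Z) {c t0 : ℝ}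
    (h0 : ∀ l, X t0 l - Z t0 l < c) :
    ∀ t, t0 ≤ t → ∀ l, X t l - Z t l < c := by
  have := gronwall (univ : Finset (Fin n))
    (fun l t => X t l - Z t l)
    (fun l t => (Med (X t) l - X t l) - (Med (Z t) l - Z t l))
    (fun l _ t => (hX t l).sub (hZ t l))
    (c := c) (t0 := t0)
    (fun t _ hle l _ => by
      have hle' : ∀ j, X t j - Z t j ≤ c := fun j => hle j (Finset.mem_univ j)
      have hm : Med (X t) l ≤ Med (Z t) l + c :=
        medComp hW hMed (fun j => by linarith [hle' j]) l
      show (Med (X t) l - X t l) - (Med (Z t) l - Z t l) ≤ c - (X t l - Z t l)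
      linarith)
    (fun l _ => h0 l)
  exact fun t ht l => this t ht l (Finset.mem_univ l)

private lemma sol_comp (hW : RowStochastic W) (hMed : IsMedSelection W Med)
    {X Z : ℝ → Fin n → ℝ} (hX : IsSol Med X) (hZ : IsSol Med Z) {c t0 : ℝ}
    (h0 : ∀ l, X t0 l - Z t0 l ≤ c) :
    ∀ t, t0 ≤ t → ∀ l, X t l - Z t l ≤ c := by
  intro t ht l
  by_contra hgt
  push_neg at hgt
  have hε : ∀ ε : ℝ, 0 < ε → X t l - Z t l < c + ε := fun ε hε =>
    sol_comp_strict hW hMed hX hZ (fun j => lt_of_le_of_lt (h0 j) (by linarith)) t ht l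
  have := hε ((X t l - Z t l - c) / 2) (by linarith)
  linarith

private lemma sol_freeze (hW : RowStochastic W) (hMed : IsMedSelection W Med)
    {X : ℝ → Fin n → ℝ} (hX : IsSol Med X) {C : Finset (Fin n)}
    (hC : ∀ j ∈ C, 1/2 ≤ ∑ l ∈ C, W j l) {y t0 : ℝ}
    (h0 : ∀ l ∈ C, y ≤ X t0 l) :
    ∀ t, t0 ≤ t → ∀ l ∈ C, y ≤ X t l := by
  intro t ht l hl
  by_contra hlt
  push_neg at hlt
  set ε := (y - X t l) / 2 with hε
  have hεpos : 0 < ε := by simp only [hε]; linarith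
  have := gronwall C (fun l t => y - X t l)
    (fun l t => X t l - Med (X t) l)
    (fun l _ t => by
      have h := (hX t l).const_sub y
      rw [neg_sub] at h
      exact h)
    (c := ε) (t0 := t0)
    (fun s _ hle j hj => by
      have hle' : ∀ l' ∈ C, y - X s l' ≤ ε := hle
      have hmem : C ⊆ univ.filter (fun l => y - ε ≤ X s l) := by
        intro l' hl'
        simp only [Finset.mem_filter, Finset.mem_univ, true_and]
        linarith [hle' l' hl']
      have hmass : 1/2 ≤ ∑ l' ∈ univ.filter (fun l' => y - ε ≤ X s l'), W j l' :=
        le_trans (hC j hj) (sum_subset_le hW j hmem)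
      have hMedge : y - ε ≤ Med (X s) j :=
        medB hW hMed hmass (by linarith [hle' j hj])
      show X s j - Med (X s) j ≤ ε - (y - X s j)
      linarith)
    (fun j hj => by
      show y - X t0 j < ε
      linarith [h0 j hj])
  have h2 : y - X t l < ε := this t ht l hl
  simp only [hε] at h2
  linarith


private lemma sol_cont {X : ℝ → Fin n → ℝ} (hX : IsSol Med X) (l : Fin n) :
    Continuous (fun t => X t l) :=
  continuous_iff_continuousAt.mpr (fun t => (hX t l).continuousAt)

private lemma sol_le_const (hW : RowStochastic W) (hMed : IsMedSelection W Med)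
    {X : ℝ → Fin n → ℝ} (hX : IsSol Med X) {c t0 : ℝ} (h0 : ∀ l, X t0 l ≤ c) :
    ∀ t, t0 ≤ t → ∀ l, X t l ≤ c := by
  have hZ : IsSol Med (fun _ : ℝ => (fun _ : Fin n => c)) :=
    isSol_const (fun j => medConst hMed c j)
  have h := sol_comp hW hMed hX hZ (c := 0) (t0 := t0) (fun l => by simpa using h0 l)
  intro t ht l
  have := h t ht l
  simpa using this

private lemma sol_ge_const (hW : RowStochastic W) (hMed : IsMedSelection W Med)
    {X : ℝ → Fin n → ℝ} (hX : IsSol Med X) {c t0 : ℝ} (h0 : ∀ l, c ≤ X t0 l) :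
    ∀ t, t0 ≤ t → ∀ l, c ≤ X t l := by
  have hZ : IsSol Med (fun _ : ℝ => (fun _ : Fin n => c)) :=
    isSol_const (fun j => medConst hMed c j)
  have h := sol_comp hW hMed hZ hX (c := 0) (t0 := t0) (fun l => by simpa using h0 l)
  intro t ht l
  have := h t ht l
  simpa using this

/-- A limit of a CTWM solution is a fixed point of the median operator. -/
private lemma med_fixed_of_tendsto (hW : RowStochastic W) (hMed : IsMedSelection W Med)
    {X : ℝ → Fin n → ℝ} (hX : IsSol Med X) {xs : Fin n → ℝ}
    (hconv : ∀ l, Tendsto (fun t => X t l) atTop (𝓝 (xs l))) (i : Fin n) :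
    Med xs i = xs i := by
  rcases lt_trichotomy (Med xs i) (xs i) with hlt | heq | hgt
  · -- Med xs i < xs i : the trajectory would escape to -∞
    exfalso
    have hmass := medC' hW hMed hlt
    have hFne : (univ.filter (fun l => xs l < xs i)).Nonempty := by
      rcases Finset.eq_empty_or_nonempty (univ.filter (fun l => xs l < xs i)) with he | hne
      · rw [he] at hmass; simp at hmass; linarith
      · exact hne
    obtain ⟨l0, hl0F, hl0max⟩ :=
      Finset.exists_max_image (univ.filter (fun l => xs l < xs i)) xs hFne
    set γ := xs i - xs l0 with hγ
    have hγpos : 0 < γ := by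
      have := (Finset.mem_filter.mp hl0F).2
      simp only [hγ]; linarith
    have hev : ∀ᶠ t in atTop, ∀ l, |X t l - xs l| < γ/4 := by
      refine eventually_all.mpr (fun l => ?_)
      have := Metric.tendsto_nhds.mp (hconv l) (γ/4) (by positivity)
      simpa [Real.dist_eq] using this
    obtain ⟨T, hT⟩ := eventually_atTop.mp hev
    have hder : ∀ t, T ≤ t → Med (X t) i - X t i ≤ -(γ/2) := by
      intro t ht
      have hTt := hT t ht
      have hup : Med (X t) i ≤ xs i - 3*γ/4 := by
        apply medA' hW hMed
        have hsub : univ.filter (fun l => xs l < xs i) ⊆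
            univ.filter (fun l => X t l ≤ xs i - 3*γ/4) := by
          intro l hl
          simp only [Finset.mem_filter, Finset.mem_univ, true_and] at *
          have h1 := abs_lt.mp (hTt l)
          have h2 := abs_lt.mp (hTt i)
          have h3 : xs l ≤ xs l0 := hl0max l (by simp [hl])
          simp only [hγ] at *
          linarith
        exact lt_of_lt_of_le hmass (sum_subset_le hW i hsub)
      have h2i := abs_lt.mp (hTt i)
      linarith
    -- X · i decreases at rate γ/2 forever: contradiction with convergence
    have hmono : AntitoneOn (fun t => X t i + (γ/2) * t) (Set.Ici T) := by
      apply antitoneOn_of_deriv_nonpos (convex_Ici T)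
      · exact ((sol_cont hX i).add (continuous_const.mul continuous_id)).continuousOn
      · intro t _
        have hd : HasDerivAt (fun t => X t i + (γ/2) * t) ((Med (X t) i - X t i) + γ/2) t := by
          have h2 : HasDerivAt (fun t : ℝ => (γ/2) * t) (γ/2) t := by
            simpa using (hasDerivAt_id t).const_mul (γ/2)
          exact (hX t i).add h2
        exact hd.differentiableAt.differentiableWithinAt
      · intro t ht
        rw [interior_Ici] at ht
        have hd : HasDerivAt (fun t => X t i + (γ/2) * t) ((Med (X t) i - X t i) + γ/2) t := by
          have h1 := (hX t i)
          have h2 : HasDerivAt (fun t : ℝ => (γ/2) * t) (γ/2) t := by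
            simpa using (hasDerivAt_id t).const_mul (γ/2)
          exact h1.add h2
        rw [hd.deriv]
        linarith [hder t ht.le]
    obtain ⟨T2, hT2⟩ := eventually_atTop.mp (hev.and (Metric.tendsto_nhds.mp (hconv i) 1 one_pos))
    obtain ⟨t1, ht1T, ht1T2, h9⟩ :
        ∃ t1, T ≤ t1 ∧ T2 ≤ t1 ∧ (4/γ) * (1 + |xs i| + |X T i|) ≤ t1 - T := by
      refine ⟨max T T2 + (4/γ) * (1 + |xs i| + |X T i|) + 1, ?_, ?_, ?_⟩
      · have h4 : 0 ≤ (4/γ) * (1 + |xs i| + |X T i|) := by positivity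
        have := le_max_left T T2
        linarith
      · have h4 : 0 ≤ (4/γ) * (1 + |xs i| + |X T i|) := by positivity
        have := le_max_right T T2
        linarith
      · have := le_max_left T T2
        linarith
    have hm := hmono (Set.mem_Ici.mpr (le_refl T)) (Set.mem_Ici.mpr ht1T) ht1T
    -- X t1 i + γ/2 t1 ≤ X T i + γ/2 T
    have hclose := (hT2 t1 ht1T2).2
    rw [Real.dist_eq] at hclose
    have h5 := abs_lt.mp hclose
    have h6 : X T i ≤ |X T i| := le_abs_self _
    have h7 : -|xs i| ≤ xs i := neg_abs_le _
    have hm' : X t1 i + γ/2 * t1 ≤ X T i + γ/2 * T := hm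
    have h8 : γ/2 * (t1 - T) ≤ X T i - X t1 i := by linarith
    have h10 : γ/2 * (t1 - T) ≥ γ/2 * ((4/γ) * (1 + |xs i| + |X T i|)) := by
      apply mul_le_mul_of_nonneg_left h9 (by positivity)
    have h11 : γ/2 * ((4/γ) * (1 + |xs i| + |X T i|)) = 2 * (1 + |xs i| + |X T i|) := by
      field_simp; ring
    rw [h11] at h10
    have h12 : X t1 i > xs i - 1 := by linarith
    linarith [abs_nonneg (xs i), abs_nonneg (X T i)]
  · exact heq
  · -- xs i < Med xs i : symmetric, trajectory escapes to +∞
    exfalso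
    have hmass := medC hW hMed hgt
    have hFne : (univ.filter (fun l => xs i < xs l)).Nonempty := by
      rcases Finset.eq_empty_or_nonempty (univ.filter (fun l => xs i < xs l)) with he | hne
      · rw [he] at hmass; simp at hmass; linarith
      · exact hne
    obtain ⟨l0, hl0F, hl0min⟩ :=
      Finset.exists_min_image (univ.filter (fun l => xs i < xs l)) xs hFne
    set γ := xs l0 - xs i with hγ
    have hγpos : 0 < γ := by
      have := (Finset.mem_filter.mp hl0F).2
      simp only [hγ]; linarith
    have hev : ∀ᶠ t in atTop, ∀ l, |X t l - xs l| < γ/4 := by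
      refine eventually_all.mpr (fun l => ?_)
      have := Metric.tendsto_nhds.mp (hconv l) (γ/4) (by positivity)
      simpa [Real.dist_eq] using this
    obtain ⟨T, hT⟩ := eventually_atTop.mp hev
    have hder : ∀ t, T ≤ t → γ/2 ≤ Med (X t) i - X t i := by
      intro t ht
      have hTt := hT t ht
      have hup : xs i + 3*γ/4 ≤ Med (X t) i := by
        apply medA hW hMed
        have hsub : univ.filter (fun l => xs i < xs l) ⊆
            univ.filter (fun l => xs i + 3*γ/4 ≤ X t l) := by
          intro l hl
          simp only [Finset.mem_filter, Finset.mem_univ, true_and] at *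
          have h1 := abs_lt.mp (hTt l)
          have h2 := abs_lt.mp (hTt i)
          have h3 : xs l0 ≤ xs l := hl0min l (by simp [hl])
          simp only [hγ] at *
          linarith
        exact lt_of_lt_of_le hmass (sum_subset_le hW i hsub)
      have h2i := abs_lt.mp (hTt i)
      linarith
    have hmono : MonotoneOn (fun t => X t i - (γ/2) * t) (Set.Ici T) := by
      apply monotoneOn_of_deriv_nonneg (convex_Ici T)
      · exact ((sol_cont hX i).sub (continuous_const.mul continuous_id)).continuousOn
      · intro t _
        have hd : HasDerivAt (fun t => X t i - (γ/2) * t) ((Med (X t) i - X t i) - γ/2) t := by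
          have h2 : HasDerivAt (fun t : ℝ => (γ/2) * t) (γ/2) t := by
            simpa using (hasDerivAt_id t).const_mul (γ/2)
          exact (hX t i).sub h2
        exact hd.differentiableAt.differentiableWithinAt
      · intro t ht
        rw [interior_Ici] at ht
        have hd : HasDerivAt (fun t => X t i - (γ/2) * t) ((Med (X t) i - X t i) - γ/2) t := by
          have h2 : HasDerivAt (fun t : ℝ => (γ/2) * t) (γ/2) t := by
            simpa using (hasDerivAt_id t).const_mul (γ/2)
          exact (hX t i).sub h2
        rw [hd.deriv]
        linarith [hder t ht.le]
    obtain ⟨T2, hT2⟩ := eventually_atTop.mp (hev.and (Metric.tendsto_nhds.mp (hconv i) 1 one_pos))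
    obtain ⟨t1, ht1T, ht1T2, h9⟩ :
        ∃ t1, T ≤ t1 ∧ T2 ≤ t1 ∧ (4/γ) * (1 + |xs i| + |X T i|) ≤ t1 - T := by
      refine ⟨max T T2 + (4/γ) * (1 + |xs i| + |X T i|) + 1, ?_, ?_, ?_⟩
      · have h4 : 0 ≤ (4/γ) * (1 + |xs i| + |X T i|) := by positivity
        have := le_max_left T T2
        linarith
      · have h4 : 0 ≤ (4/γ) * (1 + |xs i| + |X T i|) := by positivity
        have := le_max_right T T2
        linarith
      · have := le_max_left T T2
        linarith
    have hm := hmono (Set.mem_Ici.mpr (le_refl T)) (Set.mem_Ici.mpr ht1T) ht1T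
    have hclose := (hT2 t1 ht1T2).2
    rw [Real.dist_eq] at hclose
    have h5 := abs_lt.mp hclose
    have h6 : -|X T i| ≤ X T i := neg_abs_le _
    have h7 : xs i ≤ |xs i| := le_abs_self _
    have hm' : X T i - γ/2 * T ≤ X t1 i - γ/2 * t1 := hm
    have h8 : γ/2 * (t1 - T) ≤ X t1 i - X T i := by linarith
    have h10 : γ/2 * (t1 - T) ≥ γ/2 * ((4/γ) * (1 + |xs i| + |X T i|)) := by
      apply mul_le_mul_of_nonneg_left h9 (by positivity)
    have h11 : γ/2 * ((4/γ) * (1 + |xs i| + |X T i|)) = 2 * (1 + |xs i| + |X T i|) := by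
      field_simp; ring
    rw [h11] at h10
    have h12 : X t1 i < xs i + 1 := by linarith
    linarith [abs_nonneg (xs i), abs_nonneg (X T i)]

/-- A fixed point of the weighted-median operator lies in `Xeq`. -/
private lemma mem_Xeq_of_fixed (hW : RowStochastic W) {xs : Fin n → ℝ}
    (hfix : ∀ i, IsWeightedMedian xs (W i) (xs i)) : xs ∈ Xeq W := by
  intro r _ _
  constructor
  · intro i hi
    have hmass : 1/2 ≤ ∑ l ∈ univ.filter (fun l => xs i ≤ xs l), W i l := by
      have hlo := (hfix i).2.1
      have hsp := mass_split hW i (fun l => xs l < xs i)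
      have hcongr : univ.filter (fun l => ¬ xs l < xs i) =
          univ.filter (fun l => xs i ≤ xs l) := by
        apply Finset.filter_congr
        intro l _
        simp [not_lt]
      rw [hcongr] at hsp
      linarith
    refine le_trans hmass (sum_subset_le hW i ?_)
    intro l hl
    simp only [Finset.mem_filter, Finset.mem_univ, true_and] at hl
    simp only [orderLe, Finset.mem_filter, Finset.mem_univ, true_and] at hi ⊢
    refine lt_of_le_of_lt (Finset.card_le_card ?_) hi
    intro v hv
    simp only [Finset.mem_filter] at hv ⊢
    exact ⟨hv.1, lt_of_le_of_lt hl hv.2⟩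
  · intro i hi hgt
    have hup := (hfix i).2.2
    have hsub : orderLe xs r ⊆ univ.filter (fun l => xs i < xs l) := by
      intro l hl
      simp only [orderLe, Finset.mem_filter, Finset.mem_univ, true_and] at hl hi ⊢
      by_contra hle
      push_neg at hle
      apply hi
      refine lt_of_le_of_lt (Finset.card_le_card ?_) hl
      intro v hv
      simp only [Finset.mem_filter] at hv ⊢
      exact ⟨hv.1, lt_of_le_of_lt hle hv.2⟩
    exact absurd (lt_of_lt_of_le hgt (sum_subset_le hW i hsub)) (not_lt.mpr hup)



/-- Core convergence: every coordinate of a bounded CTWM solution converges to its limsup. -/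
private lemma ctwm_conv (hW : RowStochastic W) (hMed : IsMedSelection W Med)
    {X : ℝ → Fin n → ℝ} (hX : IsSol Med X)
    (hXsol : ∀ p : Fin n → ℝ, ∃ Z : ℝ → Fin n → ℝ, (∀ l, Z 0 l = p l) ∧ IsSol Med Z)
    {R : ℝ} (hR : ∀ t, 0 ≤ t → ∀ l, |X t l| ≤ R) :
    ∀ i, Tendsto (fun t => X t i) atTop (𝓝 (limsup (fun t => X t i) atTop)) := by
  set s : Fin n → ℝ := fun l => limsup (fun t => X t l) atTop with hs
  have hbdd : ∀ l, IsBoundedUnder (· ≤ ·) atTop (fun t => X t l) := fun l =>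
    ⟨R, eventually_map.mpr ((eventually_ge_atTop 0).mono (fun t ht => (abs_le.mp (hR t ht l)).2))⟩
  have hbdd' : ∀ l, IsBoundedUnder (· ≥ ·) atTop (fun t => X t l) := fun l =>
    ⟨-R, eventually_map.mpr ((eventually_ge_atTop 0).mono (fun t ht => (abs_le.mp (hR t ht l)).1))⟩
  have main : ∀ i : Fin n, (∀ j, s i < s j → Tendsto (fun t => X t j) atTop (𝓝 (s j))) →
      Tendsto (fun t => X t i) atTop (𝓝 (s i)) := by
    intro i IH
    -- Step 1: choose escape times uₘ realizing the limsup.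
    have hchoose : ∀ m : ℕ, ∃ t : ℝ, (m : ℝ) + 1 ≤ t ∧ |X t i - s i| < 1/((m:ℝ)+1) := by
      intro m
      have hpos : (0:ℝ) < 1/((m:ℝ)+1) := by positivity
      have h1 : ∃ᶠ t in atTop, s i - 1/((m:ℝ)+1) < X t i := by
        apply frequently_lt_of_lt_limsup ((hbdd' i).isCoboundedUnder_le)
        simp only [hs]
        linarith
      have h2 : ∀ᶠ t in atTop, X t i < s i + 1/((m:ℝ)+1) := by
        apply eventually_lt_of_limsup_lt _ (hbdd i)
        simp only [hs]
        linarith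
      have h3 : ∀ᶠ t in (atTop : Filter ℝ), (m:ℝ)+1 ≤ t := eventually_ge_atTop _
      obtain ⟨t, ht1, ht2, ht3⟩ := (h1.and_eventually (h2.and h3)).exists
      exact ⟨t, ht3, abs_lt.mpr ⟨by linarith, by linarith⟩⟩
    choose u hu1 hu2 using hchoose
    have hutop : Tendsto u atTop atTop := by
      apply tendsto_atTop_mono (fun m => ?_) tendsto_natCast_atTop_atTop
      linarith [hu1 m]
    have hXu : Tendsto (fun m => X (u m) i) atTop (𝓝 (s i)) := by
      rw [tendsto_iff_dist_tendsto_zero]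
      apply squeeze_zero (fun m => dist_nonneg) (fun m => ?_)
        tendsto_one_div_add_atTop_nhds_zero_nat
      rw [Real.dist_eq]
      exact (hu2 m).le
    -- Step 2: compactness, pick a limit point one unit in the past.
    have humem : ∀ m, X (u m - 1) ∈ Set.pi Set.univ (fun _ : Fin n => Set.Icc (-R) R) := by
      intro m l _
      have h0um : (0:ℝ) ≤ u m - 1 := by
        have h1 := hu1 m
        have h2 : (0:ℝ) ≤ (m:ℝ) := Nat.cast_nonneg m
        linarith
      have := abs_le.mp (hR _ h0um l)
      exact ⟨this.1, this.2⟩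
    obtain ⟨p, _, ψ, hψ, hψconv⟩ :=
      (isCompact_univ_pi (fun _ : Fin n => isCompact_Icc)).tendsto_subseq humem
    set tk : ℕ → ℝ := fun k => u (ψ k) with htk
    have htktop : Tendsto tk atTop atTop := hutop.comp hψ.tendsto_atTop
    -- Step 3: a solution ζ through p, with past down to -1.
    obtain ⟨Z0, hZ00, hZ0⟩ := hXsol p
    set ζ : ℝ → Fin n → ℝ := fun t => Z0 (t + 1) with hζdef
    have hζsol : IsSol Med ζ := isSol_shift hZ0 1
    have hζm1 : ∀ l, ζ (-1) l = p l := by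
      intro l
      show Z0 (-1 + 1) l = p l
      rw [show (-1:ℝ) + 1 = 0 by ring]
      exact hZ00 l
    set eps : ℕ → ℝ := fun k => ∑ l, |X (tk k - 1) l - p l| with heps
    have hepsnn : ∀ k, ∀ l, |X (tk k - 1) l - p l| ≤ eps k := by
      intro k l
      show |X (tk k - 1) l - p l| ≤ ∑ l', |X (tk k - 1) l' - p l'|
      exact Finset.single_le_sum (f := fun l' => |X (tk k - 1) l' - p l'|)
        (fun l' _ => abs_nonneg _) (Finset.mem_univ l)
    have heps0 : Tendsto eps atTop (𝓝 0) := by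
      have hco : ∀ l, Tendsto (fun k => |X (tk k - 1) l - p l|) atTop (𝓝 0) := by
        intro l
        have hcl : Tendsto (fun k => X (tk k - 1) l) atTop (𝓝 (p l)) := by
          have := tendsto_pi_nhds.mp hψconv l
          exact this
        have hsub : Tendsto (fun k => X (tk k - 1) l - p l) atTop (𝓝 (p l - p l)) :=
          hcl.sub tendsto_const_nhds
        have habs := hsub.abs
        simpa using habs
      have := tendsto_finset_sum (univ : Finset (Fin n)) (fun l _ => hco l)
      simpa using this
    -- Step 4: nonexpansive transfer.
    have htr1 : ∀ k, ∀ t, (-1:ℝ) ≤ t → ∀ l, X (t + tk k) l - ζ t l ≤ eps k := by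
      intro k
      apply sol_comp hW hMed (isSol_shift hX (tk k)) hζsol (t0 := -1)
      intro l
      have harg : (-1:ℝ) + tk k = tk k - 1 := by ring
      rw [harg, hζm1 l]
      exact le_trans (le_abs_self _) (hepsnn k l)
    have htr2 : ∀ k, ∀ t, (-1:ℝ) ≤ t → ∀ l, ζ t l - X (t + tk k) l ≤ eps k := by
      intro k
      apply sol_comp hW hMed hζsol (isSol_shift hX (tk k)) (t0 := -1)
      intro l
      have harg : (-1:ℝ) + tk k = tk k - 1 := by ring
      rw [harg, hζm1 l]
      have h2 := abs_le.mp (hepsnn k l)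
      linarith [h2.1]
    have hlim : ∀ t, (-1:ℝ) ≤ t → ∀ l, Tendsto (fun k => X (t + tk k) l) atTop (𝓝 (ζ t l)) := by
      intro t ht l
      rw [tendsto_iff_dist_tendsto_zero]
      apply squeeze_zero (fun k => dist_nonneg) (fun k => ?_) heps0
      rw [Real.dist_eq]
      exact abs_le.mpr ⟨by linarith [htr2 k t ht l], by linarith [htr1 k t ht l]⟩
    -- Step 5: basic properties of ζ.
    have hζ0i : ζ 0 i = s i := by
      have h1 : Tendsto (fun k => X (0 + tk k) i) atTop (𝓝 (ζ 0 i)) :=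
        hlim 0 (by norm_num) i
      have h2 : Tendsto (fun k => X (0 + tk k) i) atTop (𝓝 (s i)) := by
        have := hXu.comp hψ.tendsto_atTop
        simpa [zero_add, Function.comp_def] using this
      exact tendsto_nhds_unique h1 h2
    have hζle : ∀ t, (-1:ℝ) ≤ t → ∀ l, ζ t l ≤ s l := by
      intro t ht l
      refine le_of_forall_pos_le_add (fun ε hε => ?_)
      have hev : ∀ᶠ τ in atTop, X τ l < s l + ε := by
        apply eventually_lt_of_limsup_lt _ (hbdd l)
        simp only [hs]
        linarith
      have htk' : Tendsto (fun k => t + tk k) atTop atTop :=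
        tendsto_atTop_add_const_left atTop t htktop
      have hk : ∀ᶠ k in atTop, X (t + tk k) l < s l + ε := htk'.eventually hev
      exact le_of_tendsto (hlim t ht l) (hk.mono (fun k h => h.le))
    have hζhi : ∀ t, (-1:ℝ) ≤ t → ∀ j, s i < s j → ζ t j = s j := by
      intro t ht j hj
      have h1 := hlim t ht j
      have htk' : Tendsto (fun k => t + tk k) atTop atTop :=
        tendsto_atTop_add_const_left atTop t htktop
      have h2 : Tendsto (fun k => X (t + tk k) j) atTop (𝓝 (s j)) := (IH j hj).comp htk'
      exact tendsto_nhds_unique h1 h2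
    -- Step 6: the super-level set at time 0 is cohesive.
    set S0 := univ.filter (fun l => s i ≤ ζ 0 l) with hS0def
    have hiS0 : i ∈ S0 := by
      simp only [hS0def, Finset.mem_filter, Finset.mem_univ, true_and, hζ0i, le_refl]
    have hcoh : ∀ j ∈ S0, 1/2 ≤ ∑ l ∈ S0, W j l := by
      intro j hj
      have hyj : s i ≤ ζ 0 j := (Finset.mem_filter.mp hj).2
      have hsjy : s i ≤ s j := le_trans hyj (hζle 0 (by norm_num) j)
      have hmain : ∃ B : Finset (Fin n), B ⊆ S0 ∧ 1/2 ≤ ∑ l ∈ B, W j l := by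
        rcases eq_or_lt_of_le hsjy with hcase | hcase
        · -- s j = s i : the oscillation analysis
          have hsj : s j = s i := hcase.symm
          have hζ0j : ζ 0 j = s i := le_antisymm (hsj ▸ hζle 0 (by norm_num) j) hyj
          by_cases hflat : ∃ δ : ℝ, 0 < δ ∧ δ ≤ 1 ∧ ∀ τ, -δ ≤ τ → τ ≤ 0 → ζ τ j = s i
          · -- flat before 0
            obtain ⟨δ, hδ0, hδ1, hδflat⟩ := hflat
            have hders : ∀ m : ℕ, Med (ζ (-δ/((m:ℝ)+2))) j = s i := by
              intro m
              have hm2 : (1:ℝ) < (m:ℝ)+2 := by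
                have : (0:ℝ) ≤ (m:ℝ) := Nat.cast_nonneg m
                linarith
              have hτmem : -δ/((m:ℝ)+2) ∈ Set.Ioo (-δ) (0:ℝ) := by
                constructor
                · rw [neg_div]
                  exact neg_lt_neg (div_lt_self hδ0 hm2)
                · rw [neg_div]
                  simp only [Left.neg_neg_iff]
                  positivity
              have h1 : HasDerivAt (fun t => ζ t j)
                  (Med (ζ (-δ/((m:ℝ)+2))) j - ζ (-δ/((m:ℝ)+2)) j) (-δ/((m:ℝ)+2)) :=
                hζsol _ j
              have h2 : HasDerivAt (fun t => ζ t j) 0 (-δ/((m:ℝ)+2)) := by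
                apply HasDerivAt.congr_of_eventuallyEq (hasDerivAt_const _ (s i))
                exact Filter.eventuallyEq_of_mem (isOpen_Ioo.mem_nhds hτmem)
                  (fun τ' hτ' => hδflat τ' hτ'.1.le hτ'.2.le)
              have h3 := h1.unique h2
              have h4 : ζ (-δ/((m:ℝ)+2)) j = s i :=
                hδflat _ hτmem.1.le hτmem.2.le
              linarith
            have hBm : ∀ m : ℕ,
                1/2 ≤ ∑ l ∈ univ.filter (fun l => s i ≤ ζ (-δ/((m:ℝ)+2)) l), W j l := by
              intro m
              obtain ⟨_, hlo, _⟩ := (hMed (ζ (-δ/((m:ℝ)+2))) j).1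
              rw [hders m] at hlo
              have hsp := mass_split hW j (fun l => ζ (-δ/((m:ℝ)+2)) l < s i)
              have hcongr : univ.filter (fun l => ¬ ζ (-δ/((m:ℝ)+2)) l < s i) =
                  univ.filter (fun l => s i ≤ ζ (-δ/((m:ℝ)+2)) l) := by
                apply Finset.filter_congr
                intro l _
                simp [not_lt]
              rw [hcongr] at hsp
              linarith
            obtain ⟨B, hBinf⟩ := Finite.exists_infinite_fiber
              (fun m : ℕ => univ.filter (fun l => s i ≤ ζ (-δ/((m:ℝ)+2)) l))
            have hBfreq : ∃ᶠ m : ℕ in atTop,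
                univ.filter (fun l => s i ≤ ζ (-δ/((m:ℝ)+2)) l) = B := by
              refine Filter.frequently_atTop.mpr (fun a => ?_)
              have hinf := Set.infinite_coe_iff.mp hBinf
              obtain ⟨b, hbS, hab⟩ := hinf.exists_gt a
              exact ⟨b, hab.le, by simpa using hbS⟩
            obtain ⟨m0, hm0⟩ := hBfreq.exists
            refine ⟨B, ?_, by rw [← hm0]; exact hBm m0⟩
            intro l hlB
            simp only [hS0def, Finset.mem_filter, Finset.mem_univ, true_and]
            by_contra hls
            push_neg at hls
            have hτ0 : Tendsto (fun m : ℕ => -δ/((m:ℝ)+2)) atTop (𝓝 0) := by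
              have h1 : Tendsto (fun m : ℕ => (m:ℝ)+2) atTop atTop :=
                tendsto_atTop_add_const_right atTop 2 tendsto_natCast_atTop_atTop
              have h2 := h1.inv_tendsto_atTop
              have h3 := h2.const_mul (-δ)
              simp only [mul_zero] at h3
              have h4 : (fun m : ℕ => -δ/((m:ℝ)+2)) = fun m : ℕ => (-δ) * (((m:ℝ)+2)⁻¹) := by
                funext m
                rw [div_eq_mul_inv]
              rw [h4]
              exact h3
            have hcont : Tendsto (fun m : ℕ => ζ (-δ/((m:ℝ)+2)) l) atTop (𝓝 (ζ 0 l)) :=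
              ((sol_cont hζsol l).tendsto 0).comp hτ0
            have hev : ∀ᶠ m : ℕ in atTop, ζ (-δ/((m:ℝ)+2)) l < s i :=
              hcont.eventually_lt_const hls
            obtain ⟨m1, hm1B, hm1lt⟩ := (hBfreq.and_eventually hev).exists
            have hlin : l ∈ univ.filter (fun l => s i ≤ ζ (-δ/((m1:ℝ)+2)) l) :=
              hm1B ▸ hlB
            have := (Finset.mem_filter.mp hlin).2
            linarith
          · -- not flat: rising approach
            push_neg at hflat
            have hσ : ∀ m : ℕ, ∃ τ, -(1/((m:ℝ)+1)) ≤ τ ∧ τ < 0 ∧ ζ τ j < s i := by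
              intro m
              have hp1 : (0:ℝ) < 1/((m:ℝ)+1) := by positivity
              have hp2 : (1:ℝ)/((m:ℝ)+1) ≤ 1 := by
                rw [div_le_one (by positivity)]
                have : (0:ℝ) ≤ (m:ℝ) := Nat.cast_nonneg m
                linarith
              obtain ⟨τ, h1, h2, h3⟩ := hflat (1/((m:ℝ)+1)) hp1 hp2
              have hm1 : (-1:ℝ) ≤ τ := by linarith
              have hle : ζ τ j ≤ s i := hsj ▸ hζle τ hm1 j
              have hlt : ζ τ j < s i := lt_of_le_of_ne hle h3
              have hτ0 : τ < 0 := by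
                rcases lt_or_eq_of_le h2 with h | h
                · exact h
                · exfalso
                  rw [h] at hlt
                  rw [hζ0j] at hlt
                  exact lt_irrefl _ hlt
              exact ⟨τ, h1, hτ0, hlt⟩
            choose σ hσ1 hσ2 hσ3 using hσ
            have hmvt : ∀ m : ℕ, ∃ c ∈ Set.Ioo (σ m) 0, 0 < Med (ζ c) j - ζ c j := by
              intro m
              obtain ⟨c, hc, hceq⟩ := exists_hasDerivAt_eq_slope (fun t => ζ t j)
                (fun t => Med (ζ t) j - ζ t j) (hσ2 m)
                ((sol_cont hζsol j).continuousOn)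
                (fun τ _ => hζsol τ j)
              refine ⟨c, hc, ?_⟩
              rw [hceq]
              apply div_pos
              · rw [hζ0j]
                linarith [hσ3 m]
              · linarith [hσ2 m]
            choose c hcmem hcpos using hmvt
            have hBm : ∀ m, 1/2 < ∑ l ∈ univ.filter (fun l => ζ (c m) j < ζ (c m) l), W j l :=
              fun m => medC hW hMed (by linarith [hcpos m])
            have hc0 : Tendsto c atTop (𝓝 0) := by
              apply tendsto_of_tendsto_of_tendsto_of_le_of_le
                (g := fun m : ℕ => -(1/((m:ℝ)+1))) (h := fun _ : ℕ => (0:ℝ))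
              · have := (tendsto_one_div_add_atTop_nhds_zero_nat (𝕜 := ℝ)).neg
                simpa using this
              · exact tendsto_const_nhds
              · exact fun m => le_trans (hσ1 m) (hcmem m).1.le
              · exact fun m => (hcmem m).2.le
            obtain ⟨B, hBinf⟩ := Finite.exists_infinite_fiber
              (fun m : ℕ => univ.filter (fun l => ζ (c m) j < ζ (c m) l))
            have hBfreq : ∃ᶠ m : ℕ in atTop,
                univ.filter (fun l => ζ (c m) j < ζ (c m) l) = B := by
              refine Filter.frequently_atTop.mpr (fun a => ?_)
              have hinf := Set.infinite_coe_iff.mp hBinf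
              obtain ⟨b, hbS, hab⟩ := hinf.exists_gt a
              exact ⟨b, hab.le, by simpa using hbS⟩
            obtain ⟨m0, hm0⟩ := hBfreq.exists
            refine ⟨B, ?_, by rw [← hm0]; linarith [hBm m0]⟩
            intro l hlB
            simp only [hS0def, Finset.mem_filter, Finset.mem_univ, true_and]
            by_contra hls
            push_neg at hls
            have hcl : Tendsto (fun m => ζ (c m) l) atTop (𝓝 (ζ 0 l)) :=
              ((sol_cont hζsol l).tendsto 0).comp hc0
            have hcj : Tendsto (fun m => ζ (c m) j) atTop (𝓝 (s i)) := by
              have := ((sol_cont hζsol j).tendsto 0).comp hc0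
              rwa [hζ0j] at this
            have hev1 : ∀ᶠ m in atTop, ζ (c m) l < (ζ 0 l + s i)/2 :=
              hcl.eventually_lt_const (by linarith)
            have hev2 : ∀ᶠ m in atTop, (ζ 0 l + s i)/2 < ζ (c m) j :=
              hcj.eventually_const_lt (by linarith)
            obtain ⟨m1, hm1B, hm1l, hm1j⟩ := (hBfreq.and_eventually (hev1.and hev2)).exists
            have hlin : l ∈ univ.filter (fun l => ζ (c m1) j < ζ (c m1) l) := hm1B ▸ hlB
            have := (Finset.mem_filter.mp hlin).2
            linarith
        · -- s i < s j : j is pinned at s j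
          have hconstj : ∀ t, (-1:ℝ) ≤ t → ζ t j = s j := fun t ht => hζhi t ht j hcase
          have hder0 : Med (ζ 0) j = ζ 0 j := by
            have h1 : HasDerivAt (fun t => ζ t j) (Med (ζ 0) j - ζ 0 j) 0 := hζsol 0 j
            have h2 : HasDerivAt (fun t => ζ t j) 0 0 := by
              apply HasDerivAt.congr_of_eventuallyEq (hasDerivAt_const 0 (s j))
              have hmem : Set.Ioi (-1 : ℝ) ∈ 𝓝 (0:ℝ) := isOpen_Ioi.mem_nhds (by norm_num)
              exact Filter.eventuallyEq_of_mem hmem (fun τ hτ => hconstj τ (le_of_lt hτ))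
            have := h1.unique h2
            linarith
          refine ⟨univ.filter (fun l => ζ 0 j ≤ ζ 0 l), ?_, ?_⟩
          · intro l hl
            simp only [Finset.mem_filter, Finset.mem_univ, true_and] at hl
            simp only [hS0def, Finset.mem_filter, Finset.mem_univ, true_and]
            linarith
          · obtain ⟨_, hlo, _⟩ := (hMed (ζ 0) j).1
            rw [hder0] at hlo
            have hsp := mass_split hW j (fun l => ζ 0 l < ζ 0 j)
            have hcongr : univ.filter (fun l => ¬ ζ 0 l < ζ 0 j) =
                univ.filter (fun l => ζ 0 j ≤ ζ 0 l) := by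
              apply Finset.filter_congr
              intro l _
              simp [not_lt]
            rw [hcongr] at hsp
            linarith
      obtain ⟨B, hBsub, hBmass⟩ := hmain
      exact le_trans hBmass (sum_subset_le hW j hBsub)
    -- Step 7: freezing + transfer back.
    have hfreeze : ∀ t, 0 ≤ t → s i ≤ ζ t i := fun t ht =>
      sol_freeze hW hMed hζsol hcoh (t0 := 0)
        (fun l hl => (Finset.mem_filter.mp hl).2) t ht i hiS0
    have hlif : s i ≤ liminf (fun t => X t i) atTop := by
      have hk : ∀ k, s i - eps k ≤ liminf (fun t => X t i) atTop := by
        intro k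
        apply le_liminf_of_le ((hbdd i).isCoboundedUnder_ge)
        filter_upwards [eventually_ge_atTop (tk k)] with t ht
        have hm1 : (-1:ℝ) ≤ t - tk k := by linarith
        have h1 := htr2 k (t - tk k) hm1 i
        have h2 := hfreeze (t - tk k) (by linarith)
        have harg : (t - tk k) + tk k = t := by ring
        rw [harg] at h1
        linarith
      have hten : Tendsto (fun k => s i - eps k) atTop (𝓝 (s i)) := by
        have h : Tendsto (fun k : ℕ => s i - eps k) atTop (𝓝 (s i - 0)) :=
          Filter.Tendsto.sub tendsto_const_nhds heps0
        simpa using h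
      exact le_of_tendsto hten (Filter.Eventually.of_forall hk)
    have hlsup : limsup (fun t => X t i) atTop = s i := by simp [hs]
    apply tendsto_of_liminf_eq_limsup _ hlsup (hbdd i) (hbdd' i)
    have h1 : liminf (fun t => X t i) atTop ≤ s i := by
      rw [← hlsup]
      exact liminf_le_limsup (hbdd i) (hbdd' i)
    linarith [hlif, h1]
  -- strong induction on the number of strictly-higher levels
  have key : ∀ k : ℕ, ∀ i : Fin n, (univ.filter (fun j => s i < s j)).card ≤ k →
      Tendsto (fun t => X t i) atTop (𝓝 (s i)) := by
    intro k
    induction k with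
    | zero =>
      intro i hi
      apply main i
      intro j hj
      exfalso
      have hmem : j ∈ univ.filter (fun j' => s i < s j') := by
        simp only [Finset.mem_filter, Finset.mem_univ, true_and]
        exact hj
      have := Finset.card_pos.mpr ⟨j, hmem⟩
      omega
    | succ k IHk =>
      intro i hi
      apply main i
      intro j hj
      apply IHk j
      have hss : univ.filter (fun j' => s j < s j') ⊂ univ.filter (fun j' => s i < s j') := by
        rw [Finset.ssubset_def]
        constructor
        · intro j' hj'
          simp only [Finset.mem_filter, Finset.mem_univ, true_and] at hj' ⊢
          exact lt_trans hj hj'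
        · intro hsup
          have hmem : j ∈ univ.filter (fun j' => s j < s j') := by
            apply hsup
            simp only [Finset.mem_filter, Finset.mem_univ, true_and]
            exact hj
          simp only [Finset.mem_filter, Finset.mem_univ, true_and] at hmem
          exact lt_irrefl _ hmem
      have := Finset.card_lt_card hss
      omega
  intro i
  exact key n i (by simpa using Finset.card_filter_le univ (fun j => s i < s j))


end CTWMAux

/-- Global convergence of the CTWM dynamics: every solution converges to some
equilibrium in `X_eq`. -/
theorem ctwm_global_convergence {n : ℕ}
    (W : Matrix (Fin n) (Fin n) ℝ) (hW : RowStochastic W)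
    (Med : (Fin n → ℝ) → Fin n → ℝ) (hMed : IsMedSelection W Med)
    (φ : (Fin n → ℝ) → ℝ → (Fin n → ℝ))
    (hφ : IsFlow (fun x => Med x - x) φ) :
    ∀ x0 : Fin n → ℝ, ∃ xs ∈ Xeq W, Tendsto (φ x0) atTop (𝓝 xs) := by
  intro x0
  have hXsol : IsSol Med (φ x0) := isSol_of_flow hφ x0
  set R := (∑ l, |x0 l|) with hRdef
  have hub : ∀ l, x0 l ≤ R := fun l =>
    le_trans (le_abs_self _)
      (Finset.single_le_sum (fun j _ => abs_nonneg (x0 j)) (Finset.mem_univ l))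
  have hlb : ∀ l, -R ≤ x0 l := fun l =>
    le_trans (neg_le_neg (Finset.single_le_sum (fun j _ => abs_nonneg (x0 j))
      (Finset.mem_univ l))) (neg_abs_le _)
  have hX0 : ∀ l, φ x0 0 l = x0 l := fun l => by rw [(hφ x0).1]
  have hRbd : ∀ t, 0 ≤ t → ∀ l, |φ x0 t l| ≤ R := by
    intro t ht l
    rw [abs_le]
    constructor
    · exact sol_ge_const hW hMed hXsol (t0 := 0) (fun l' => by rw [hX0 l']; exact hlb l') t ht l
    · exact sol_le_const hW hMed hXsol (t0 := 0) (fun l' => by rw [hX0 l']; exact hub l') t ht l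
  have hconv := ctwm_conv hW hMed hXsol
    (fun p => ⟨φ p, fun l => by rw [(hφ p).1], isSol_of_flow hφ p⟩) hRbd
  set xs : Fin n → ℝ := fun l => limsup (fun t => φ x0 t l) atTop with hxs
  have hfix : ∀ i, Med xs i = xs i := med_fixed_of_tendsto hW hMed hXsol hconv
  have hfix' : ∀ i, IsWeightedMedian xs (W i) (xs i) := fun i => by
    have h := (hMed xs i).1
    rwa [hfix i] at h
  exact ⟨xs, mem_Xeq_of_fixed hW hfix', tendsto_pi_nhds.mpr hconv⟩
end

section
/- Graph-theoretic condition for consensus: the solution φ(t,x0) of the CTWM dynamics converges to a consensus equilibrium (a vector of the form c·1_n) for every initial condition x0 ∈ ℝ^n if and only if V is the only maximal cohesive set of G(W). -/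
open Finset Filter Topology

namespace CTWMAux


variable {n : ℕ}

lemma sum_sdiff_eq {W : Matrix (Fin n) (Fin n) ℝ} (hW : RowStochastic W)
    (M : Finset (Fin n)) (i : Fin n) :
    ∑ j ∈ univ \ M, W i j = 1 - ∑ j ∈ M, W i j := by
  have h := hW.2 i
  have := Finset.sum_sdiff (f := W i) (subset_univ M)
  linarith

/-- At a minimizer of a cohesive set, the median is at least the current value. -/
lemma med_ge_min {W : Matrix (Fin n) (Fin n) ℝ} (hW : RowStochastic W)
    {Med : (Fin n → ℝ) → Fin n → ℝ} (hMed : IsMedSelection W Med)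
    {M : Finset (Fin n)} (hcoh : Cohesive W M) {i : Fin n} (hi : i ∈ M)
    (x : Fin n → ℝ) (hmin : ∀ j ∈ M, x i ≤ x j) : x i ≤ Med x i := by
  by_contra hcon
  push_neg at hcon
  have hxi : IsWeightedMedian x (W i) (x i) := by
    refine ⟨⟨i, rfl⟩, ?_, ?_⟩
    · have hsub : univ.filter (fun j => x j < x i) ⊆ univ \ M := by
        intro j hj
        simp only [mem_filter, mem_univ, true_and] at hj
        refine Finset.mem_sdiff.2 ⟨mem_univ j, ?_⟩
        intro hjM
        exact absurd (hmin j hjM) (not_le.2 hj)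
      have h1 : ∑ j ∈ univ.filter (fun j => x j < x i), W i j ≤ ∑ j ∈ univ \ M, W i j :=
        Finset.sum_le_sum_of_subset_of_nonneg hsub (fun j _ _ => hW.1 i j)
      have h2 := sum_sdiff_eq hW M i
      have h3 := hcoh i hi
      linarith
    · obtain ⟨_, _, h2⟩ := (hMed x i).1
      refine le_trans (Finset.sum_le_sum_of_subset_of_nonneg ?_ (fun j _ _ => hW.1 i j)) h2
      intro j hj
      simp only [mem_filter, mem_univ, true_and] at hj ⊢
      exact lt_trans hcon hj
  have hle := (hMed x i).2 (x i) hxi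
  rw [sub_self, abs_zero, abs_nonpos_iff, sub_eq_zero] at hle
  exact absurd hle (ne_of_lt hcon)

/-- At a maximizer of a cohesive set, the median is at most the current value. -/
lemma med_le_max {W : Matrix (Fin n) (Fin n) ℝ} (hW : RowStochastic W)
    {Med : (Fin n → ℝ) → Fin n → ℝ} (hMed : IsMedSelection W Med)
    {M : Finset (Fin n)} (hcoh : Cohesive W M) {i : Fin n} (hi : i ∈ M)
    (x : Fin n → ℝ) (hmax : ∀ j ∈ M, x j ≤ x i) : Med x i ≤ x i := by
  by_contra hcon
  push_neg at hcon
  have hxi : IsWeightedMedian x (W i) (x i) := by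
    refine ⟨⟨i, rfl⟩, ?_, ?_⟩
    · obtain ⟨_, h1, _⟩ := (hMed x i).1
      refine le_trans (Finset.sum_le_sum_of_subset_of_nonneg ?_ (fun j _ _ => hW.1 i j)) h1
      intro j hj
      simp only [mem_filter, mem_univ, true_and] at hj ⊢
      exact lt_trans hj hcon
    · have hsub : univ.filter (fun j => x i < x j) ⊆ univ \ M := by
        intro j hj
        simp only [mem_filter, mem_univ, true_and] at hj
        refine Finset.mem_sdiff.2 ⟨mem_univ j, ?_⟩
        intro hjM
        exact absurd (hmax j hjM) (not_le.2 hj)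
      have h1 : ∑ j ∈ univ.filter (fun j => x i < x j), W i j ≤ ∑ j ∈ univ \ M, W i j :=
        Finset.sum_le_sum_of_subset_of_nonneg hsub (fun j _ _ => hW.1 i j)
      have h2 := sum_sdiff_eq hW M i
      have h3 := hcoh i hi
      linarith
  have hle := (hMed x i).2 (x i) hxi
  rw [sub_self, abs_zero, abs_nonpos_iff, sub_eq_zero] at hle
  exact absurd hle (ne_of_gt hcon)



variable {n : ℕ}

/-- If more than half the mass is strictly above `c`, every median is `> c`. -/
lemma medians_gt {p w : Fin n → ℝ} (hw : ∀ j, 0 ≤ w j) {c : ℝ}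
    (h : 1 / 2 < ∑ j ∈ univ.filter (fun j => c < p j), w j) :
    ∀ m, IsWeightedMedian p w m → c < m := by
  intro m hm
  by_contra hmc
  push_neg at hmc
  have hsub : univ.filter (fun j => c < p j) ⊆ univ.filter (fun j => m < p j) := by
    intro j hj
    simp only [mem_filter, mem_univ, true_and] at hj ⊢
    exact lt_of_le_of_lt hmc hj
  have := Finset.sum_le_sum_of_subset_of_nonneg hsub (fun j _ _ => hw j)
  have h2 := hm.2.2
  linarith

/-- If more than half the mass is strictly below `c`, every median is `< c`. -/
lemma medians_lt {p w : Fin n → ℝ} (hw : ∀ j, 0 ≤ w j) {c : ℝ}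
    (h : 1 / 2 < ∑ j ∈ univ.filter (fun j => p j < c), w j) :
    ∀ m, IsWeightedMedian p w m → m < c := by
  intro m hm
  by_contra hmc
  push_neg at hmc
  have hsub : univ.filter (fun j => p j < c) ⊆ univ.filter (fun j => p j < m) := by
    intro j hj
    simp only [mem_filter, mem_univ, true_and] at hj ⊢
    exact lt_of_lt_of_le hj hmc
  have := Finset.sum_le_sum_of_subset_of_nonneg hsub (fun j _ _ => hw j)
  have h2 := hm.2.1
  linarith

/-- If more than half the mass is at level `≤ c`, the selected median is `≤ c`. -/
lemma med_le_of_mass_below {W : Matrix (Fin n) (Fin n) ℝ} (hW : RowStochastic W)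
    {Med : (Fin n → ℝ) → Fin n → ℝ} (hMed : IsMedSelection W Med)
    (p : Fin n → ℝ) (k : Fin n) {c : ℝ}
    (h : 1 / 2 < ∑ j ∈ univ.filter (fun j => p j ≤ c), W k j) :
    Med p k ≤ c := by
  by_contra hcon
  push_neg at hcon
  have h1 := (hMed p k).1.2.1
  have hsub : univ.filter (fun j => p j ≤ c) ⊆ univ.filter (fun j => p j < Med p k) := by
    intro j hj
    simp only [mem_filter, mem_univ, true_and] at hj ⊢
    exact lt_of_le_of_lt hj hcon
  have := Finset.sum_le_sum_of_subset_of_nonneg hsub (fun j _ _ => hW.1 k j)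
  linarith

/-- If more than half the mass is at level `≥ c`, the selected median is `≥ c`. -/
lemma med_ge_of_mass_above {W : Matrix (Fin n) (Fin n) ℝ} (hW : RowStochastic W)
    {Med : (Fin n → ℝ) → Fin n → ℝ} (hMed : IsMedSelection W Med)
    (p : Fin n → ℝ) (k : Fin n) {c : ℝ}
    (h : 1 / 2 < ∑ j ∈ univ.filter (fun j => c ≤ p j), W k j) :
    c ≤ Med p k := by
  by_contra hcon
  push_neg at hcon
  have h1 := (hMed p k).1.2.2
  have hsub : univ.filter (fun j => c ≤ p j) ⊆ univ.filter (fun j => Med p k < p j) := by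
    intro j hj
    simp only [mem_filter, mem_univ, true_and] at hj ⊢
    exact lt_of_lt_of_le hcon hj
  have := Finset.sum_le_sum_of_subset_of_nonneg hsub (fun j _ _ => hW.1 k j)
  linarith

/-- If the weight of strict upper and lower sets at `p i` are both at most `1/2`,
then `Med p i = p i`. -/
lemma med_self {W : Matrix (Fin n) (Fin n) ℝ}
    {Med : (Fin n → ℝ) → Fin n → ℝ} (hMed : IsMedSelection W Med)
    (p : Fin n → ℝ) (i : Fin n)
    (hL : ∑ j ∈ univ.filter (fun j => p j < p i), W i j ≤ 1 / 2)
    (hR : ∑ j ∈ univ.filter (fun j => p i < p j), W i j ≤ 1 / 2) :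
    Med p i = p i := by
  have hmed : IsWeightedMedian p (W i) (p i) := ⟨⟨i, rfl⟩, hL, hR⟩
  have hle := (hMed p i).2 (p i) hmed
  rw [sub_self, abs_zero, abs_nonpos_iff, sub_eq_zero] at hle
  exact hle

/-- The weighted-median operator is nonexpansive at the argmax coordinate of `x - y`. -/
lemma med_nonexpansive {W : Matrix (Fin n) (Fin n) ℝ} (hW : RowStochastic W)
    {Med : (Fin n → ℝ) → Fin n → ℝ} (hMed : IsMedSelection W Med)
    (x y : Fin n → ℝ) (i : Fin n) (hm : ∀ j, x j - y j ≤ x i - y i) :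
    Med x i - Med y i ≤ x i - y i := by
  classical
  set m : ℝ := x i - y i with hmdef
  by_contra hcon
  push_neg at hcon
  -- hcon : m < Med x i - Med y i, i.e. Med y i + m < Med x i
  have hxy : ∀ j, x j ≤ y j + m := fun j => by have := hm j; linarith
  rcases le_or_gt (Med x i) (x i) with hB | hA
  · -- Case B : Med x i ≤ x i, hence Med y i < y i
    have hyi : Med y i < y i := by linarith
    -- y i is not a median, and a majority is strictly below y i
    have hLy : 1 / 2 < ∑ j ∈ univ.filter (fun j => y j < y i), W i j := by
      by_contra hLy
      push_neg at hLy
      rcases le_or_gt (∑ j ∈ univ.filter (fun j => y i < y j), W i j) (1/2) with hRy | hRy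
      · have := med_self hMed y i hLy hRy
        linarith
      · have := medians_gt (fun j => hW.1 i j) hRy (Med y i) (hMed y i).1
        linarith
    -- greatest-median property for y : every median of y is ≤ Med y i
    have hgr : ∀ m', IsWeightedMedian y (W i) m' → m' ≤ Med y i := by
      intro m' hm'
      have h1 := medians_lt (fun j => hW.1 i j) hLy m' hm'
      have h2 := medians_lt (fun j => hW.1 i j) hLy (Med y i) (hMed y i).1
      have hle := (hMed y i).2 m' hm'
      rw [abs_of_neg (by linarith : Med y i - y i < 0), abs_of_neg (by linarith : m' - y i < 0)] at hle
      linarith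
    set c' : ℝ := Med x i - m with hc'def
    -- the set of j with c' ≤ y j is nonempty
    obtain ⟨j1, hj1⟩ := (hMed x i).1.1
    have hj1A : c' ≤ y j1 := by
      have := hxy j1
      rw [hj1] at this
      linarith
    set A : Finset (Fin n) := univ.filter (fun j => c' ≤ y j) with hAdef
    have hAne : A.Nonempty := ⟨j1, by simp [hAdef, hj1A]⟩
    set v : ℝ := A.inf' hAne y with hvdef
    have hvc : c' ≤ v := Finset.le_inf' hAne y (fun j hj => (mem_filter.1 hj).2)
    obtain ⟨j0, hj0A, hj0⟩ := Finset.exists_mem_eq_inf' hAne y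
    have hfilt : univ.filter (fun j => y j < v) = univ.filter (fun j => y j < c') := by
      ext j
      simp only [mem_filter, mem_univ, true_and]
      constructor
      · intro hjv
        by_contra hjc
        push_neg at hjc
        have : j ∈ A := by simp [hAdef, hjc]
        have := Finset.inf'_le y this
        linarith
      · intro hjc
        linarith
    have hLyv : ∑ j ∈ univ.filter (fun j => y j < v), W i j ≤ 1 / 2 := by
      rw [hfilt]
      have hsub : univ.filter (fun j => y j < c') ⊆ univ.filter (fun j => x j < Med x i) := by
        intro j hj
        simp only [mem_filter, mem_univ, true_and] at hj ⊢
        have := hxy j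
        linarith
      exact le_trans (Finset.sum_le_sum_of_subset_of_nonneg hsub (fun j _ _ => hW.1 i j))
        (hMed x i).1.2.1
    rcases le_or_gt (∑ j ∈ univ.filter (fun j => v < y j), W i j) (1/2) with hRyv | hRyv
    · -- v is a median of y, so Med y i ≥ ... contradiction via greatest property? no: v ≤ Med y i
      have hvmed : IsWeightedMedian y (W i) v := ⟨⟨j0, hj0.symm⟩, hLyv, hRyv⟩
      have := hgr v hvmed
      linarith
    · have := medians_gt (fun j => hW.1 i j) hRyv (Med y i) (hMed y i).1
      linarith
  · -- Case A : x i < Med x i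
    have hRx : 1 / 2 < ∑ j ∈ univ.filter (fun j => x i < x j), W i j := by
      by_contra hRx
      push_neg at hRx
      rcases le_or_gt (∑ j ∈ univ.filter (fun j => x j < x i), W i j) (1/2) with hLx | hLx
      · have := med_self hMed x i hLx hRx
        linarith
      · have := medians_lt (fun j => hW.1 i j) hLx (Med x i) (hMed x i).1
        linarith
    -- least-median property for x
    have hlst : ∀ m', IsWeightedMedian x (W i) m' → Med x i ≤ m' := by
      intro m' hm'
      have h1 := medians_gt (fun j => hW.1 i j) hRx m' hm'
      have h2 := medians_gt (fun j => hW.1 i j) hRx (Med x i) (hMed x i).1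
      have hle := (hMed x i).2 m' hm'
      rw [abs_of_pos (by linarith : 0 < Med x i - x i), abs_of_pos (by linarith : 0 < m' - x i)] at hle
      linarith
    set c : ℝ := Med y i + m with hcdef
    obtain ⟨j1, hj1⟩ := (hMed y i).1.1
    have hj1A : x j1 ≤ c := by
      have := hxy j1
      rw [hj1] at this
      linarith
    set A : Finset (Fin n) := univ.filter (fun j => x j ≤ c) with hAdef
    have hAne : A.Nonempty := ⟨j1, by simp [hAdef, hj1A]⟩
    set v : ℝ := A.sup' hAne x with hvdef
    have hvc : v ≤ c := Finset.sup'_le hAne x (fun j hj => (mem_filter.1 hj).2)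
    obtain ⟨j0, hj0A, hj0⟩ := Finset.exists_mem_eq_sup' hAne x
    have hfilt : univ.filter (fun j => v < x j) = univ.filter (fun j => c < x j) := by
      ext j
      simp only [mem_filter, mem_univ, true_and]
      constructor
      · intro hjv
        by_contra hjc
        push_neg at hjc
        have : j ∈ A := by simp [hAdef, hjc]
        have := Finset.le_sup' x this
        linarith
      · intro hjc
        linarith
    have hRxv : ∑ j ∈ univ.filter (fun j => v < x j), W i j ≤ 1 / 2 := by
      rw [hfilt]
      have hsub : univ.filter (fun j => c < x j) ⊆ univ.filter (fun j => Med y i < y j) := by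
        intro j hj
        simp only [mem_filter, mem_univ, true_and] at hj ⊢
        have := hxy j
        linarith
      exact le_trans (Finset.sum_le_sum_of_subset_of_nonneg hsub (fun j _ _ => hW.1 i j))
        (hMed y i).1.2.2
    rcases le_or_gt (∑ j ∈ univ.filter (fun j => x j < v), W i j) (1/2) with hLxv | hLxv
    · have hvmed : IsWeightedMedian x (W i) v := ⟨⟨j0, hj0.symm⟩, hLxv, hRxv⟩
      have := hlst v hvmed
      linarith
    · have := medians_lt (fun j => hW.1 i j) hLxv (Med x i) (hMed x i).1
      linarith

/-- Barrier lemma from an arbitrary starting time. -/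
lemma min_barrier {ι : Type*} {M : Finset ι} (hM : M.Nonempty)
    (f d : ι → ℝ → ℝ) {t₀ : ℝ}
    (hf : ∀ i ∈ M, ∀ t, HasDerivAt (f i) (d i t) t)
    (hd : ∀ t, t₀ ≤ t → ∀ i ∈ M, (∀ j ∈ M, f i t ≤ f j t) → 0 ≤ d i t)
    {c : ℝ} (h0 : ∀ i ∈ M, c ≤ f i t₀) {T : ℝ} (hT : t₀ ≤ T) :
    ∀ i ∈ M, c ≤ f i T := by
  set g : ℝ → ℝ := fun t => M.inf' hM (fun i => f i t) with hgdef
  have hgc : Continuous g := by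
    refine continuous_iff_continuousAt.2 fun t => ?_
    exact ContinuousAt.finset_inf'_apply hM (fun i hi => (hf i hi t).continuousAt)
  have key : ∀ ⦃x⦄, x ∈ Set.Icc t₀ T → -g x ≤ -g t₀ := by
    refine image_le_of_liminf_slope_right_le_deriv_boundary
      (f := fun t => -g t) (B := fun _ => -g t₀) (B' := fun _ => (0:ℝ))
      (hgc.neg.continuousOn) le_rfl continuousOn_const
      (fun x _ => hasDerivWithinAt_const x _ (-g t₀)) ?_
    intro x hx r hr
    have hr' : (0:ℝ) < r := hr
    have hj : ∀ j ∈ M, ∀ᶠ z in 𝓝[>] x, g x - r * (z - x) < f j z := by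
      intro j hjM
      rcases eq_or_lt_of_le (Finset.inf'_le (fun i => f i x) hjM : g x ≤ f j x) with heq | hlt
      · have hd0 : 0 ≤ d j x := by
          refine hd x hx.1 j hjM (fun k hk => ?_)
          rw [← heq]
          exact Finset.inf'_le _ hk
        have hslope : Tendsto (slope (f j) x) (𝓝[>] x) (𝓝 (d j x)) := by
          have h1 := hasDerivAt_iff_tendsto_slope.1 (hf j hjM x)
          exact h1.mono_left (nhdsWithin_mono x (fun z hz => ne_of_gt hz))
        have hev : ∀ᶠ z in 𝓝[>] x, -r < slope (f j) x z :=
          hslope (Ioi_mem_nhds (by linarith))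
        filter_upwards [hev, self_mem_nhdsWithin] with z hz hz'
        have hzx : 0 < z - x := sub_pos.2 hz'
        rw [slope_def_field, lt_div_iff₀ hzx] at hz
        have heq' : g x = f j x := heq
        nlinarith
      · have hcont : ∀ᶠ z in 𝓝 x, g x < f j z :=
          (hf j hjM x).continuousAt (Ioi_mem_nhds hlt)
        filter_upwards [nhdsWithin_le_nhds hcont, self_mem_nhdsWithin] with z hz hz'
        have hzx : 0 < z - x := sub_pos.2 hz'
        nlinarith [mul_pos hr' hzx]
    have hall : ∀ᶠ z in 𝓝[>] x, ∀ j ∈ M, g x - r * (z - x) < f j z :=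
      (eventually_all_finset M).2 hj
    have hev2 : ∀ᶠ z in 𝓝[>] x, slope (fun t => -g t) x z < r := by
      filter_upwards [hall, self_mem_nhdsWithin] with z hzall hz'
      have hzx : 0 < z - x := sub_pos.2 hz'
      have hgz : g x - r * (z - x) < g z := by
        rw [hgdef]
        exact (Finset.lt_inf'_iff hM).2 fun j hj' => hzall j hj'
      rw [slope_def_field, div_lt_iff₀ hzx]
      linarith
    exact hev2.frequently
  have hgT : g t₀ ≤ g T := by
    have := key (Set.mem_Icc.2 ⟨hT, le_rfl⟩)
    linarith
  intro i hi
  have h1 : c ≤ g t₀ := Finset.le_inf' hM _ h0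
  have h2 : g T ≤ f i T := Finset.inf'_le _ hi
  linarith

/-- Mirror barrier lemma: initial upper bounds persist. -/
lemma max_barrier {ι : Type*} {M : Finset ι} (hM : M.Nonempty)
    (f d : ι → ℝ → ℝ) {t₀ : ℝ}
    (hf : ∀ i ∈ M, ∀ t, HasDerivAt (f i) (d i t) t)
    (hd : ∀ t, t₀ ≤ t → ∀ i ∈ M, (∀ j ∈ M, f j t ≤ f i t) → d i t ≤ 0)
    {c : ℝ} (h0 : ∀ i ∈ M, f i t₀ ≤ c) {T : ℝ} (hT : t₀ ≤ T) :
    ∀ i ∈ M, f i T ≤ c := by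
  have h := min_barrier hM (fun i t => -(f i t)) (fun i t => -(d i t))
    (fun i hi t => (hf i hi t).neg)
    (fun t ht i hi hmin => by
      have hmax' : ∀ j ∈ M, f j t ≤ f i t := by
        intro j hj
        have h' : -(f i t) ≤ -(f j t) := hmin j hj
        linarith
      have h'' := hd t ht i hi hmax'
      show (0:ℝ) ≤ -(d i t)
      linarith)
    (c := -c) (fun i hi => by
      have h' := h0 i hi
      show -c ≤ -(f i t₀)
      linarith) hT
  intro i hi
  have h' : -c ≤ -(f i T) := h i hi
  linarith

section Solutions

variable {W : Matrix (Fin n) (Fin n) ℝ} {Med : (Fin n → ℝ) → Fin n → ℝ}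

/-- Minimum over a cohesive set is nondecreasing along any solution. -/
lemma sol_min_mono (hW : RowStochastic W) (hMed : IsMedSelection W Med)
    {u : ℝ → Fin n → ℝ}
    (hu : ∀ (k : Fin n) (t : ℝ), HasDerivAt (fun s => u s k) (Med (u t) k - u t k) t)
    {S : Finset (Fin n)} (hS : S.Nonempty) (hcoh : Cohesive W S)
    {s t : ℝ} (hst : s ≤ t) : ∀ i ∈ S, S.inf' hS (fun j => u s j) ≤ u t i := by
  refine min_barrier hS (fun i τ => u τ i) (fun i τ => Med (u τ) i - u τ i)
    (fun i _ τ => hu i τ) ?_ (fun i hi => Finset.inf'_le _ hi) hst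
  intro τ _ i hi hmin
  have hmin' : ∀ j ∈ S, u τ i ≤ u τ j := hmin
  have := med_ge_min hW hMed hcoh hi (u τ) hmin'
  show (0:ℝ) ≤ Med (u τ) i - u τ i
  linarith

/-- Maximum over a cohesive set is nonincreasing along any solution. -/
lemma sol_max_mono (hW : RowStochastic W) (hMed : IsMedSelection W Med)
    {u : ℝ → Fin n → ℝ}
    (hu : ∀ (k : Fin n) (t : ℝ), HasDerivAt (fun s => u s k) (Med (u t) k - u t k) t)
    {S : Finset (Fin n)} (hS : S.Nonempty) (hcoh : Cohesive W S)
    {s t : ℝ} (hst : s ≤ t) : ∀ i ∈ S, u t i ≤ S.sup' hS (fun j => u s j) := by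
  refine max_barrier hS (fun i τ => u τ i) (fun i τ => Med (u τ) i - u τ i)
    (fun i _ τ => hu i τ) ?_ (fun i hi => Finset.le_sup' _ hi) hst
  intro τ _ i hi hmax
  have hmax' : ∀ j ∈ S, u τ j ≤ u τ i := hmax
  have := med_le_max hW hMed hcoh hi (u τ) hmax'
  show Med (u τ) i - u τ i ≤ 0
  linarith

/-- Sup-norm nonexpansiveness between any two solutions. -/
lemma sol_nonexp (hW : RowStochastic W) (hMed : IsMedSelection W Med)
    (hne : (univ : Finset (Fin n)).Nonempty)
    {u v : ℝ → Fin n → ℝ}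
    (hu : ∀ (k : Fin n) (t : ℝ), HasDerivAt (fun s => u s k) (Med (u t) k - u t k) t)
    (hv : ∀ (k : Fin n) (t : ℝ), HasDerivAt (fun s => v s k) (Med (v t) k - v t k) t)
    {s t : ℝ} (hst : s ≤ t) :
    ∀ i, u t i - v t i ≤ univ.sup' hne (fun j => u s j - v s j) := by
  have h := max_barrier hne (fun i τ => u τ i - v τ i)
    (fun i τ => (Med (u τ) i - u τ i) - (Med (v τ) i - v τ i))
    (fun i _ τ => (hu i τ).sub (hv i τ)) ?_
    (c := univ.sup' hne (fun j => u s j - v s j))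
    (fun i _ => by
      show u s i - v s i ≤ _
      exact Finset.le_sup' (fun j => u s j - v s j) (mem_univ i)) hst
  · exact fun i => h i (mem_univ i)
  · intro τ _ i _ hmax
    have hm : ∀ j, u τ j - v τ j ≤ u τ i - v τ i := fun j => hmax j (mem_univ j)
    have := med_nonexpansive hW hMed (u τ) (v τ) i hm
    show (Med (u τ) i - u τ i) - (Med (v τ) i - v τ i) ≤ 0
    linarith

/-- Exponential pull-down: if the median input of node `k` stays below `c`,
its value eventually drops below `c + ε`. -/
lemma pull_down_exp {u : ℝ → Fin n → ℝ}
    (hu : ∀ (k : Fin n) (t : ℝ), HasDerivAt (fun s => u s k) (Med (u t) k - u t k) t)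
    (k : Fin n) {c T : ℝ} (hmaj : ∀ t, T ≤ t → Med (u t) k ≤ c) {ε : ℝ} (hε : 0 < ε) :
    ∀ᶠ t in atTop, u t k ≤ c + ε := by
  set g : ℝ → ℝ := fun t => (u t k - c) * Real.exp (t - T) with hgdef
  have hgd : ∀ t, HasDerivAt g ((Med (u t) k - c) * Real.exp (t - T)) t := by
    intro t
    have h1 : HasDerivAt (fun s => u s k - c) (Med (u t) k - u t k) t := (hu k t).sub_const c
    have h2 : HasDerivAt (fun s : ℝ => Real.exp (s - T)) (Real.exp (t - T)) t := by
      simpa [Function.comp_def] using (Real.hasDerivAt_exp (t - T)).comp t ((hasDerivAt_id t).sub_const T)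
    have h3 := h1.mul h2
    refine h3.congr_deriv ?_
    ring
  have hanti : AntitoneOn g (Set.Ici T) := by
    refine antitoneOn_of_deriv_nonpos (convex_Ici T) ?_ ?_ ?_
    · exact Continuous.continuousOn (by
        refine continuous_iff_continuousAt.2 fun t => (hgd t).continuousAt)
    · intro t ht
      exact ((hgd t).differentiableAt).differentiableWithinAt
    · intro t ht
      rw [interior_Ici] at ht
      rw [(hgd t).deriv]
      have hmt := hmaj t (le_of_lt ht)
      have : Med (u t) k - c ≤ 0 := by linarith
      exact mul_nonpos_of_nonpos_of_nonneg this (Real.exp_pos _).le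
  have hbound : ∀ t, T ≤ t → u t k - c ≤ (u T k - c) * Real.exp (T - t) := by
    intro t ht
    have hgt := hanti (Set.mem_Ici.2 (le_refl T)) (Set.mem_Ici.2 ht) ht
    have he1 : Real.exp (t - T) * Real.exp (T - t) = 1 := by
      rw [← Real.exp_add]
      norm_num
    have he : (0:ℝ) ≤ Real.exp (T - t) := (Real.exp_pos _).le
    have hgT : g T = u T k - c := by
      simp [hgdef]
    calc u t k - c = (u t k - c) * (Real.exp (t - T) * Real.exp (T - t)) := by rw [he1]; ring
      _ = g t * Real.exp (T - t) := by rw [hgdef]; ring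
      _ ≤ g T * Real.exp (T - t) := mul_le_mul_of_nonneg_right hgt he
      _ = (u T k - c) * Real.exp (T - t) := by rw [hgT]
  have hlim : Tendsto (fun t => (u T k - c) * Real.exp (T - t)) atTop (𝓝 0) := by
    have h1 : Tendsto (fun t : ℝ => T - t) atTop atBot := by
      have h0 : Tendsto (fun t : ℝ => -t) atTop atBot := tendsto_neg_atTop_atBot
      have := tendsto_atBot_add_const_left atTop T h0
      simpa [sub_eq_add_neg] using this
    have h2 : Tendsto (fun t : ℝ => Real.exp (T - t)) atTop (𝓝 0) :=
      Real.tendsto_exp_atBot.comp h1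
    have := h2.const_mul (u T k - c)
    simpa using this
  have hev : ∀ᶠ t in atTop, (u T k - c) * Real.exp (T - t) < ε :=
    hlim.eventually_lt_const hε
  filter_upwards [hev, eventually_ge_atTop T] with t h1 h2
  have := hbound t h2
  linarith

/-- Chain expansion: a cohesive set eventually below a level pulls the whole
network below (almost) that level; uses that `univ` is the only maximal cohesive set. -/
lemma chain_pulldown (hW : RowStochastic W) (hMed : IsMedSelection W Med)
    (hmax : ∀ M : Finset (Fin n), M.Nonempty → MaxCohesive W M → M = univ)
    {u : ℝ → Fin n → ℝ}
    (hu : ∀ (k : Fin n) (t : ℝ), HasDerivAt (fun s => u s k) (Med (u t) k - u t k) t) :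
    ∀ m : ℕ, ∀ S : Finset (Fin n), (univ \ S).card ≤ m → S.Nonempty → Cohesive W S →
    ∀ c T, (∀ t, T ≤ t → ∀ j ∈ S, u t j ≤ c) → ∀ ε : ℝ, 0 < ε →
    ∀ᶠ t in atTop, ∀ j, u t j ≤ c + ε := by
  intro m
  induction m with
  | zero =>
    intro S hcard hS hcoh c T hunder ε hε
    have hempty : univ \ S = ∅ := Finset.card_eq_zero.1 (Nat.le_zero.1 hcard)
    have hSuniv : S = univ := by
      have := Finset.sdiff_eq_empty_iff_subset.1 hempty
      exact Finset.univ_subset_iff.1 this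
    filter_upwards [eventually_ge_atTop T] with t ht j
    have := hunder t ht j (by rw [hSuniv]; exact mem_univ j)
    linarith
  | succ m ih =>
    intro S hcard hS hcoh c T hunder ε hε
    by_cases hSu : S = univ
    · filter_upwards [eventually_ge_atTop T] with t ht j
      have := hunder t ht j (by rw [hSu]; exact mem_univ j)
      linarith
    · have hnotmax : ¬ MaxCohesive W S := fun h => hSu (hmax S hS h)
      have hwit : ∃ k, k ∉ S ∧ 1 / 2 < ∑ j ∈ S, W k j := by
        by_contra h
        push_neg at h
        exact hnotmax ⟨hcoh, fun i hi => by
          intro hlt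
          exact absurd hlt (not_lt.2 (le_of_not_gt (fun hc => absurd hc (by
            have := h i hi; exact not_lt.2 this))))⟩
      obtain ⟨k, hkS, hk⟩ := hwit
      have hmaj : ∀ t, T ≤ t → Med (u t) k ≤ c := by
        intro t ht
        apply med_le_of_mass_below hW hMed
        refine lt_of_lt_of_le hk (Finset.sum_le_sum_of_subset_of_nonneg ?_
          (fun j _ _ => hW.1 k j))
        intro j hj
        simp only [mem_filter, mem_univ, true_and]
        exact hunder t ht j hj
      have hkev := pull_down_exp hu k hmaj (half_pos hε)
      obtain ⟨T2, hT2⟩ := eventually_atTop.1 (hkev.and (eventually_ge_atTop T))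
      have hcoh' : Cohesive W (insert k S) := by
        intro i hi
        rcases Finset.mem_insert.1 hi with rfl | hiS
        · rw [Finset.sum_insert hkS]
          have := hW.1 i i
          linarith
        · rw [Finset.sum_insert hkS]
          have h1 := hcoh i hiS
          have := hW.1 i k
          linarith
      have hcard' : (univ \ insert k S).card ≤ m := by
        rw [Finset.sdiff_insert]
        have hkmem : k ∈ univ \ S := Finset.mem_sdiff.2 ⟨mem_univ k, hkS⟩
        rw [Finset.card_erase_of_mem hkmem]
        omega
      have hunder' : ∀ t, T2 ≤ t → ∀ j ∈ insert k S, u t j ≤ c + ε / 2 := by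
        intro t ht j hj
        rcases Finset.mem_insert.1 hj with rfl | hjS
        · exact (hT2 t ht).1
        · have := hunder t (hT2 t ht).2 j hjS
          linarith
      have := ih (insert k S) hcard' (Finset.insert_nonempty k S) hcoh'
        (c + ε / 2) T2 hunder' (ε / 2) (half_pos hε)
      filter_upwards [this] with t ht j
      have := ht j
      linarith

end Solutions


end CTWMAux

/-- Graph-theoretic condition for consensus: every solution of the CTWM dynamics
converges to a consensus equilibrium if and only if `V` is the only (nonempty)
maximal cohesive set of `G(W)`. -/
theorem ctwm_consensus_iff {n : ℕ}
    (W : Matrix (Fin n) (Fin n) ℝ) (hW : RowStochastic W)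
    (Med : (Fin n → ℝ) → Fin n → ℝ) (hMed : IsMedSelection W Med)
    (φ : (Fin n → ℝ) → ℝ → (Fin n → ℝ))
    (hφ : IsFlow (fun x => Med x - x) φ) :
    (∀ x0 : Fin n → ℝ, ∃ c : ℝ,
        Tendsto (φ x0) atTop (𝓝 (fun _ : Fin n => c))) ↔
    (∀ M : Finset (Fin n), M.Nonempty → MaxCohesive W M → M = univ) := by
  constructor
  · intro hL M hMne hmax
    by_contra hMne'
    have hcompl : (univ \ M).Nonempty := by
      rw [Finset.sdiff_nonempty]
      intro hsub
      exact hMne' (Finset.univ_subset_iff.1 hsub)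
    classical
    set x0 : Fin n → ℝ := fun i => if i ∈ M then 1 else 0 with hx0def
    have hphi0 := (hφ x0).1
    have hco : ∀ (i : Fin n) (t : ℝ),
        HasDerivAt (fun s => φ x0 s i) (Med (φ x0 t) i - φ x0 t i) t := by
      intro i t
      have h1 := (hφ x0).2 t
      have h2 := hasDerivAt_pi.1 h1 i
      simpa using h2
    have hMc : Cohesive W (univ \ M) := by
      intro i hi
      have hi' : i ∉ M := (Finset.mem_sdiff.1 hi).2
      have h1 := hmax.2 i hi'
      have h2 := CTWMAux.sum_sdiff_eq hW M i
      push_neg at h1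
      linarith
    have hup : ∀ t, 0 ≤ t → ∀ i ∈ M, (1:ℝ) ≤ φ x0 t i := by
      intro t ht
      refine CTWMAux.min_barrier hMne (fun i s => φ x0 s i)
        (fun i s => Med (φ x0 s) i - φ x0 s i)
        (fun i _ t => hco i t) ?_ ?_ ht
      · intro s _ i hi hmin
        have hmin' : ∀ j ∈ M, φ x0 s i ≤ φ x0 s j := hmin
        have := CTWMAux.med_ge_min hW hMed hmax.1 hi (φ x0 s) hmin'
        show (0:ℝ) ≤ Med (φ x0 s) i - φ x0 s i
        linarith
      · intro i hi
        show (1:ℝ) ≤ φ x0 0 i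
        rw [hphi0]
        simp [hx0def, hi]
    have hdown : ∀ t, 0 ≤ t → ∀ i ∈ univ \ M, φ x0 t i ≤ (0:ℝ) := by
      intro t ht i hi
      have hbar : (0:ℝ) ≤ -(φ x0 t i) := by
        refine CTWMAux.min_barrier hcompl (fun i s => -(φ x0 s i))
          (fun i s => -(Med (φ x0 s) i - φ x0 s i))
          (fun i _ t => (hco i t).neg) ?_ ?_ ht i hi
        · intro s _ i' hi' hmin
          have hmax' : ∀ j ∈ univ \ M, φ x0 s j ≤ φ x0 s i' := by
            intro j hj
            have : -(φ x0 s i') ≤ -(φ x0 s j) := hmin j hj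
            linarith
          have := CTWMAux.med_le_max hW hMed hMc hi' (φ x0 s) hmax'
          show (0:ℝ) ≤ -(Med (φ x0 s) i' - φ x0 s i')
          linarith
        · intro i' hi'
          show (0:ℝ) ≤ -(φ x0 0 i')
          rw [hphi0]
          have hni : i' ∉ M := (Finset.mem_sdiff.1 hi').2
          simp [hx0def, hni]
      linarith
    obtain ⟨c, hc⟩ := hL x0
    obtain ⟨i0, hi0⟩ := hMne
    obtain ⟨j0, hj0⟩ := hcompl
    have hci : Tendsto (fun t => φ x0 t i0) atTop (𝓝 c) := by
      have := ((continuous_apply i0).tendsto _).comp hc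
      simpa [Function.comp_def] using this
    have hcj : Tendsto (fun t => φ x0 t j0) atTop (𝓝 c) := by
      have := ((continuous_apply j0).tendsto _).comp hc
      simpa [Function.comp_def] using this
    have h1c : (1:ℝ) ≤ c :=
      ge_of_tendsto hci (eventually_atTop.2 ⟨0, fun t ht => hup t ht i0 hi0⟩)
    have hc0 : c ≤ 0 :=
      le_of_tendsto hcj (eventually_atTop.2 ⟨0, fun t ht => hdown t ht j0 hj0⟩)
    linarith
  · -- Backward direction: unique maximal cohesive set implies consensus.
    intro hmax x0
    rcases Nat.eq_zero_or_pos n with hn | hn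
    · subst hn
      refine ⟨0, ?_⟩
      have hconst : φ x0 = fun _ => (fun _ : Fin 0 => (0:ℝ)) := by
        funext t i
        exact i.elim0
      rw [hconst]
      exact tendsto_const_nhds
    · classical
      have hne : (univ : Finset (Fin n)).Nonempty := ⟨⟨0, hn⟩, mem_univ _⟩
      set x : ℝ → Fin n → ℝ := φ x0 with hxdef
      have hx : ∀ (k : Fin n) (t : ℝ),
          HasDerivAt (fun s => x s k) (Med (x t) k - x t k) t := by
        intro k t
        have h1 := (hφ x0).2 t
        have h2 := hasDerivAt_pi.1 h1 k
        simpa using h2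
      have hcohV : Cohesive W univ := by
        intro i _
        rw [hW.2 i]
        norm_num
      set lV : ℝ → ℝ := fun t => univ.inf' hne (fun j => x t j) with hlVdef
      set uV : ℝ → ℝ := fun t => univ.sup' hne (fun j => x t j) with huVdef
      have hlmono : Monotone lV := by
        intro s t hst
        exact Finset.le_inf' hne _
          (fun i hi => CTWMAux.sol_min_mono hW hMed hx hne hcohV hst i hi)
      have humono : Antitone uV := by
        intro s t hst
        exact Finset.sup'_le hne _
          (fun i hi => CTWMAux.sol_max_mono hW hMed hx hne hcohV hst i hi)
      have hlu : ∀ t, lV t ≤ uV t := by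
        intro t
        exact le_trans (Finset.inf'_le _ (mem_univ (⟨0, hn⟩ : Fin n)))
          (Finset.le_sup' _ (mem_univ (⟨0, hn⟩ : Fin n)))
      have hbdd_l : BddAbove (Set.range lV) := by
        refine ⟨max (uV 0) (lV 0), ?_⟩
        rintro _ ⟨t, rfl⟩
        rcases le_total t 0 with h | h
        · exact le_max_of_le_right (hlmono h)
        · exact le_max_of_le_left (le_trans (hlu t) (humono h))
      have hbdd_u : BddBelow (Set.range uV) := by
        refine ⟨min (lV 0) (uV 0), ?_⟩
        rintro _ ⟨t, rfl⟩
        rcases le_total t 0 with h | h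
        · exact min_le_of_right_le (humono h)
        · exact min_le_of_left_le (le_trans (hlmono h) (hlu t))
      set α : ℝ := ⨆ t, lV t with hαdef
      set β : ℝ := ⨅ t, uV t with hβdef
      have hα : Tendsto lV atTop (𝓝 α) := tendsto_atTop_ciSup hlmono hbdd_l
      have hβ : Tendsto uV atTop (𝓝 β) := tendsto_atTop_ciInf humono hbdd_u
      have hlVle : ∀ t, lV t ≤ α := fun t => le_ciSup hbdd_l t
      have huVge : ∀ t, β ≤ uV t := fun t => ciInf_le hbdd_u t
      have hαβ : α ≤ β := le_of_tendsto_of_tendsto' hα hβ hlu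
      -- Every nonempty cohesive set has max at least β at all times.
      have hT1 : ∀ (S : Finset (Fin n)) (hS : S.Nonempty), Cohesive W S →
          ∀ t, β ≤ S.sup' hS (fun j => x t j) := by
        intro S hS hcoh t
        by_contra hcon
        push_neg at hcon
        set c := S.sup' hS (fun j => x t j) with hcdef
        have hunder : ∀ τ, t ≤ τ → ∀ j ∈ S, x τ j ≤ c :=
          fun τ hτ j hj => CTWMAux.sol_max_mono hW hMed hx hS hcoh hτ j hj
        have hch := CTWMAux.chain_pulldown hW hMed hmax hx (univ \ S).card S le_rfl hS
          hcoh c t hunder ((β - c) / 2) (by linarith)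
        obtain ⟨t1, ht1a, ht1b⟩ := (hch.and (eventually_ge_atTop t)).exists
        have h1 : uV t1 ≤ c + (β - c) / 2 := Finset.sup'_le hne _ (fun j _ => ht1a j)
        have h2 := huVge t1
        linarith
      -- trajectory is trapped in a compact box
      have hbox : ∀ (k : ℕ) (i : Fin n), x (k : ℝ) i ∈ Set.Icc (lV 0) (uV 0) := by
        intro k i
        constructor
        · exact CTWMAux.sol_min_mono hW hMed hx hne hcohV (Nat.cast_nonneg k) i (mem_univ i)
        · exact CTWMAux.sol_max_mono hW hMed hx hne hcohV (Nat.cast_nonneg k) i (mem_univ i)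
      have hcpt : IsCompact (Set.univ.pi (fun _ : Fin n => Set.Icc (lV 0) (uV 0))) :=
        isCompact_univ_pi (fun _ => isCompact_Icc)
      obtain ⟨z, -, σ, hσ, hzconv⟩ := hcpt.tendsto_subseq
        (x := fun k : ℕ => x (k : ℝ))
        (fun k => by
          rw [Set.mem_univ_pi]
          exact fun i => hbox k i)
      set tk : ℕ → ℝ := fun k => ((σ k : ℕ) : ℝ) with htkdef
      have htk : Tendsto tk atTop atTop :=
        tendsto_natCast_atTop_atTop.comp hσ.tendsto_atTop
      set y : ℝ → Fin n → ℝ := φ z with hydef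
      have hy : ∀ (k : Fin n) (t : ℝ),
          HasDerivAt (fun s => y s k) (Med (y t) k - y t k) t := by
        intro k t
        have h1 := (hφ z).2 t
        have h2 := hasDerivAt_pi.1 h1 k
        simpa using h2
      have hy0 : y 0 = z := (hφ z).1
      -- shifted solutions
      have hshift : ∀ (k : ℕ) (i : Fin n) (τ : ℝ),
          HasDerivAt (fun s => x (tk k + s) i)
            (Med (x (tk k + τ)) i - x (tk k + τ) i) τ := by
        intro k i τ
        have h1 := (hx i (tk k + τ)).comp τ ((hasDerivAt_id τ).const_add (tk k))
        simpa [Function.comp_def] using h1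
      set E : ℕ → ℝ := fun k => univ.sup' hne (fun j => |x (tk k) j - z j|) with hEdef
      have hzconv' : ∀ j : Fin n, Tendsto (fun k => x (tk k) j) atTop (𝓝 (z j)) := by
        intro j
        have := ((continuous_apply j).tendsto z).comp hzconv
        simpa [Function.comp_def] using this
      have hE0 : Tendsto E atTop (𝓝 0) := by
        have hsum : Tendsto (fun k => ∑ j, |x (tk k) j - z j|) atTop (𝓝 0) := by
          have h1 : ∀ j : Fin n, Tendsto (fun k => |x (tk k) j - z j|) atTop (𝓝 0) := by
            intro j
            have h1' := (hzconv' j).sub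
              (tendsto_const_nhds : Tendsto (fun _ : ℕ => z j) atTop (𝓝 (z j)))
            have h2 := h1'.abs
            simpa using h2
          have := tendsto_finset_sum (univ : Finset (Fin n)) (fun j _ => h1 j)
          simpa using this
        have hle1 : ∀ k, E k ≤ ∑ j, |x (tk k) j - z j| := by
          intro k
          refine Finset.sup'_le hne _ (fun j _ => ?_)
          exact Finset.single_le_sum (f := fun j => |x (tk k) j - z j|)
            (fun j _ => abs_nonneg _) (mem_univ j)
        have hle0 : ∀ k, 0 ≤ E k := by
          intro k
          exact le_trans (abs_nonneg (x (tk k) (⟨0, hn⟩ : Fin n) - z (⟨0, hn⟩ : Fin n)))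
            (Finset.le_sup' (f := fun j => |x (tk k) j - z j|) (mem_univ (⟨0, hn⟩ : Fin n)))
        exact tendsto_of_tendsto_of_tendsto_of_le_of_le tendsto_const_nhds hsum hle0 hle1
      -- shadowing
      have hshadow : ∀ (s : ℝ), 0 ≤ s → ∀ (i : Fin n) (k : ℕ),
          |x (tk k + s) i - y s i| ≤ E k := by
        intro s hs i k
        have h1 := CTWMAux.sol_nonexp hW hMed hne
          (u := fun τ => x (tk k + τ)) (v := y)
          (fun j τ => hshift k j τ) hy hs i
        have h2 := CTWMAux.sol_nonexp hW hMed hne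
          (u := y) (v := fun τ => x (tk k + τ))
          hy (fun j τ => hshift k j τ) hs i
        have hb1 : univ.sup' hne (fun j => x (tk k + 0) j - y 0 j) ≤ E k := by
          refine Finset.sup'_le hne _ (fun j _ => ?_)
          rw [add_zero, hy0]
          exact le_trans (le_abs_self _)
            (Finset.le_sup' (f := fun j => |x (tk k) j - z j|) (mem_univ j))
        have hb2 : univ.sup' hne (fun j => y 0 j - x (tk k + 0) j) ≤ E k := by
          refine Finset.sup'_le hne _ (fun j _ => ?_)
          rw [add_zero, hy0]
          have habs : z j - x (tk k) j ≤ |x (tk k) j - z j| := by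
            rw [abs_sub_comm]
            exact le_abs_self _
          exact le_trans habs
            (Finset.le_sup' (f := fun j => |x (tk k) j - z j|) (mem_univ j))
        rw [abs_sub_le_iff]
        constructor
        · linarith [h1, hb1]
        · linarith [h2, hb2]
      have hshadowc : ∀ (s : ℝ), 0 ≤ s → ∀ i : Fin n,
          Tendsto (fun k => x (tk k + s) i) atTop (𝓝 (y s i)) := by
        intro s hs i
        rw [← tendsto_sub_nhds_zero_iff]
        exact squeeze_zero_norm (fun k => hshadow s hs i k) hE0
      have htks : ∀ s : ℝ, Tendsto (fun k => tk k + s) atTop atTop :=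
        fun s => tendsto_atTop_add_const_right atTop s htk
      -- the global min is frozen at α along the limit trajectory
      have hyge : ∀ (s : ℝ), 0 ≤ s → ∀ i, α ≤ y s i := by
        intro s hs i
        have hlconv : Tendsto (fun k => lV (tk k + s)) atTop (𝓝 α) := hα.comp (htks s)
        exact le_of_tendsto_of_tendsto' hlconv (hshadowc s hs i)
          (fun k => Finset.inf'_le _ (mem_univ i))
      have hfreeze : ∀ (s : ℝ), 0 ≤ s → univ.inf' hne (fun j => y s j) = α := by
        intro s hs
        refine le_antisymm ?_ (Finset.le_inf' hne _ (fun i _ => hyge s hs i))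
        by_contra hgt
        push_neg at hgt
        set δ := univ.inf' hne (fun j => y s j) - α with hδdef
        have hδ : 0 < δ := by linarith
        have hev : ∀ᶠ k in atTop, ∀ i ∈ (univ : Finset (Fin n)),
            α + δ / 2 < x (tk k + s) i := by
          refine (eventually_all_finset univ).2 (fun i _ => ?_)
          refine (hshadowc s hs i).eventually_const_lt ?_
          have : univ.inf' hne (fun j => y s j) ≤ y s i := Finset.inf'_le _ (mem_univ i)
          linarith
        obtain ⟨k1, hk1⟩ := hev.exists
        have h1 : α + δ / 2 ≤ lV (tk k1 + s) :=
          Finset.le_inf' hne _ (fun i hi => le_of_lt (hk1 i hi))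
        have h2 := hlVle (tk k1 + s)
        linarith
      -- bottom plateau of the limit trajectory at time 1
      set B : Finset (Fin n) := univ.filter (fun j => y 1 j = α) with hBdef
      have hBne : B.Nonempty := by
        obtain ⟨j0, hj0mem, hj0⟩ := Finset.exists_mem_eq_inf' hne (fun j => y 1 j)
        refine ⟨j0, ?_⟩
        rw [hBdef]
        simp only [mem_filter, mem_univ, true_and]
        rw [← hj0]
        exact hfreeze 1 zero_le_one
      have hstall : ∀ i ∈ B, Med (y 1) i = α := by
        intro i hiB
        have hyi : y 1 i = α := by
          rw [hBdef] at hiB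
          simpa using hiB
        have hloc : IsLocalMin (fun s => y s i) 1 := by
          have hmem : Set.Ioi (0:ℝ) ∈ 𝓝 (1:ℝ) := isOpen_Ioi.mem_nhds (by norm_num)
          filter_upwards [hmem] with s hs
          show y 1 i ≤ y s i
          rw [hyi]
          exact hyge s (le_of_lt hs) i
        have hder := hloc.hasDerivAt_eq_zero (hy i 1)
        have : Med (y 1) i = y 1 i := by linarith [hder]
        rw [this, hyi]
      have hBcoh : Cohesive W B := by
        intro i hiB
        have hmed := (hMed (y 1) i).1
        rw [hstall i hiB] at hmed
        have hhi := hmed.2.2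
        have hflt : univ.filter (fun j => α < y 1 j) = univ \ B := by
          ext j
          simp only [mem_filter, mem_univ, true_and, Finset.mem_sdiff, hBdef]
          constructor
          · intro hj
            exact fun h => absurd h (ne_of_gt hj)
          · intro hj
            have := hyge 1 zero_le_one j
            rcases lt_or_eq_of_le this with h | h
            · exact h
            · exact absurd h.symm hj
        rw [hflt] at hhi
        have hsd := CTWMAux.sum_sdiff_eq hW B i
        linarith
      -- conclude β ≤ α
      have hβα : β ≤ α := by
        by_contra hcon
        push_neg at hcon
        set ε := (β - α) / 2 with hεdef
        have hε : 0 < ε := by linarith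
        have hev : ∀ᶠ k in atTop, ∀ i ∈ B, x (tk k + 1) i < α + ε := by
          refine (eventually_all_finset B).2 (fun i hiB => ?_)
          refine (hshadowc 1 zero_le_one i).eventually_lt_const ?_
          have : y 1 i = α := by
            rw [hBdef] at hiB
            simpa using hiB
          linarith
        obtain ⟨k1, hk1⟩ := hev.exists
        have h1 := hT1 B hBne hBcoh (tk k1 + 1)
        have h2 : B.sup' hBne (fun j => x (tk k1 + 1) j) ≤ α + ε :=
          Finset.sup'_le hBne _ (fun j hj => le_of_lt (hk1 j hj))
        linarith
      have hαβ' : α = β := le_antisymm hαβ hβα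
      refine ⟨α, tendsto_pi_nhds.2 fun i => ?_⟩
      have hβ' : Tendsto uV atTop (𝓝 α) := by
        rw [hαβ']
        exact hβ
      exact tendsto_of_tendsto_of_tendsto_of_le_of_le hα hβ'
        (fun t => Finset.inf'_le _ (mem_univ i))
        (fun t => Finset.le_sup' _ (mem_univ i))
end
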